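/- arXiv:math/0601493 — 4 statements merged into one kernel-verified Lean document; each statement's English description precedes it below -/
import Mathlib

section
/- The polynomial X^4 - 4X^3 + 3X - 1 (the characteristic polynomial of the matrix A1) has four pairwise distinct real roots, and none of these roots equals 1 or -1; hence A1 is a hyperbolic operator (it has four distinct real eigenvalues, none of absolute value 1). -/
open Matrix Polynomial

def A1R : Matrix (Fin 4) (Fin 4) ℝ :=
  !![0, 1, 0, 0; 0, 0, 1, 0; 0, 0, 0, 1; 1, -3, 0, 4]

/-- The characteristic polynomial of `A1`, as a real polynomial. -/
noncomputable def p1 : Polynomial ℝ := X ^ 4 - 4 * X ^ 3 + 3 * X - 1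

private lemma p1_eval (x : ℝ) : p1.eval x = x ^ 4 - 4 * x ^ 3 + 3 * x - 1 := by
  simp [p1]

private lemma root_in_inc {a b : ℝ} (hab : a ≤ b) (ha : p1.eval a < 0)
    (hb : 0 < p1.eval b) : ∃ x ∈ Set.Ioo a b, p1.eval x = 0 := by
  have h := intermediate_value_Ioo hab p1.continuous.continuousOn
  obtain ⟨x, hx, hx0⟩ := h ⟨ha, hb⟩
  exact ⟨x, hx, hx0⟩

private lemma root_in_dec {a b : ℝ} (hab : a ≤ b) (ha : 0 < p1.eval a)
    (hb : p1.eval b < 0) : ∃ x ∈ Set.Ioo a b, p1.eval x = 0 := by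
  have h := intermediate_value_Ioo' hab p1.continuous.continuousOn
  obtain ⟨x, hx, hx0⟩ := h ⟨hb, ha⟩
  exact ⟨x, hx, hx0⟩

private lemma p1_natDegree : p1.natDegree = 4 := by
  unfold p1; compute_degree!

private lemma p1_ne_zero : p1 ≠ 0 := by
  intro h
  have := p1_natDegree
  rw [h] at this
  simp at this

private lemma spec_of_root (μ : ℝ) (h : p1.eval μ = 0) : μ ∈ spectrum ℝ A1R := by
  rw [spectrum.mem_iff, Matrix.isUnit_iff_isUnit_det, isUnit_iff_ne_zero]
  simp only [not_not]
  have e : ((algebraMap ℝ (Matrix (Fin 4) (Fin 4) ℝ)) μ - A1R)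
      = !![μ, -1, 0, 0; 0, μ, -1, 0; 0, 0, μ, -1; -1, 3, 0, μ-4] := by
    ext i j
    fin_cases i <;> fin_cases j <;>
      simp [Matrix.algebraMap_eq_diagonal, A1R, Matrix.diagonal,
        Matrix.vecHead, Matrix.vecTail]
  rw [e, Matrix.det_succ_row_zero]
  simp [Fin.sum_univ_succ, Matrix.det_fin_three, Fin.succAbove]
  have hp : μ ^ 4 - 4 * μ ^ 3 + 3 * μ - 1 = 0 := by simpa [p1_eval] using h
  linarith

theorem statement1 :
    ∃ r : Fin 4 → ℝ,
      Function.Injective r ∧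
      (∀ i, p1.eval (r i) = 0) ∧
      (∀ x : ℝ, p1.eval x = 0 → ∃ i, x = r i) ∧
      (∀ i, r i ≠ 1 ∧ r i ≠ -1) ∧
      (∀ i, r i ∈ spectrum ℝ A1R) ∧
      (∀ i, |r i| ≠ 1) := by
  obtain ⟨a, ha, hra⟩ := root_in_dec (a := -1) (b := 0) (by norm_num)
    (by rw [p1_eval]; norm_num) (by rw [p1_eval]; norm_num)
  obtain ⟨b, hb, hrb⟩ := root_in_inc (a := 0) (b := 1/2) (by norm_num)
    (by rw [p1_eval]; norm_num) (by rw [p1_eval]; norm_num)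
  obtain ⟨c, hc, hrc⟩ := root_in_dec (a := 1/2) (b := 1) (by norm_num)
    (by rw [p1_eval]; norm_num) (by rw [p1_eval]; norm_num)
  obtain ⟨d, hd, hrd⟩ := root_in_inc (a := 3) (b := 4) (by norm_num)
    (by rw [p1_eval]; norm_num) (by rw [p1_eval]; norm_num)
  obtain ⟨ha1, ha2⟩ := ha
  obtain ⟨hb1, hb2⟩ := hb
  obtain ⟨hc1, hc2⟩ := hc
  obtain ⟨hd1, hd2⟩ := hd
  refine ⟨![a, b, c, d], ?_, ?_, ?_, ?_, ?_, ?_⟩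
  · intro i j hij
    fin_cases i <;> fin_cases j <;> simp_all <;> linarith
  · intro i
    fin_cases i <;> simpa
  · intro x hx
    -- the multiset {a,b,c,d} equals p1.roots
    have hnodup : Multiset.Nodup ({a, b, c, d} : Multiset ℝ) := by
      simp only [Multiset.insert_eq_cons, Multiset.nodup_cons, Multiset.mem_cons,
        Multiset.mem_singleton, not_or, Multiset.nodup_singleton]
      refine ⟨⟨?_, ?_, ?_⟩, ⟨?_, ?_⟩, ?_, trivial⟩ <;> intro h <;> linarith
    have hle : ({a, b, c, d} : Multiset ℝ) ≤ p1.roots := by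
      rw [Multiset.le_iff_subset hnodup]
      intro y hy
      rw [Polynomial.mem_roots p1_ne_zero]
      have hy' : y = a ∨ y = b ∨ y = c ∨ y = d := by simpa using hy
      rcases hy' with rfl | rfl | rfl | rfl <;> assumption
    have hcard : p1.roots.card ≤ 4 := by
      have := Polynomial.card_roots' p1
      rwa [p1_natDegree] at this
    have heq : p1.roots = ({a, b, c, d} : Multiset ℝ) :=
      (Multiset.eq_of_le_of_card_le hle (by simpa using hcard)).symm
    have hxmem : x ∈ p1.roots := by rw [Polynomial.mem_roots p1_ne_zero]; exact hx
    rw [heq] at hxmem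
    have hx' : x = a ∨ x = b ∨ x = c ∨ x = d := by simpa using hxmem
    rcases hx' with rfl | rfl | rfl | rfl
    · exact ⟨0, by simp⟩
    · exact ⟨1, by simp⟩
    · exact ⟨2, by simp⟩
    · exact ⟨3, by simp⟩
  · intro i
    fin_cases i <;> constructor <;> simp <;> intro h <;> linarith
  · intro i
    fin_cases i <;> simp <;> [exact spec_of_root a hra; exact spec_of_root b hrb;
      exact spec_of_root c hrc; exact spec_of_root d hrd]
  · intro i
    fin_cases i <;> simp
    · exact (abs_lt.mpr ⟨by linarith, by linarith⟩).ne
    · exact (abs_lt.mpr ⟨by linarith, by linarith⟩).ne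
    · exact (abs_lt.mpr ⟨by linarith, by linarith⟩).ne
    · exact (lt_of_lt_of_le (by linarith) (le_abs_self d)).ne'
end

section
/- The matrices B11, B12, B13 generate a free abelian group of rank 3: for all integers i, j, k, if B11^i · B12^j · B13^k equals the identity matrix, then i = j = k = 0. -/
open Matrix Polynomial

def A1 : Matrix (Fin 4) (Fin 4) ℚ :=
  !![0, 1, 0, 0; 0, 0, 1, 0; 0, 0, 0, 1; 1, -3, 0, 4]

lemma hdetA1 : A1.det ≠ 0 := by
  rw [Matrix.det_succ_row_zero]
  simp only [Fin.sum_univ_four, Matrix.det_fin_three, Matrix.submatrix_apply]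
  simp (config := {decide := true}) [A1]

lemma hdetA1sub : (A1 - 1).det ≠ 0 := by
  have h : A1 - 1 = !![-1, 1, 0, 0; 0, -1, 1, 0; 0, 0, -1, 1; 1, -3, 0, 3] := by
    ext i j
    fin_cases i <;> fin_cases j <;>
      simp [A1, Matrix.one_apply, Matrix.vecHead, Matrix.vecTail] <;> norm_num
  rw [h, Matrix.det_succ_row_zero]
  simp only [Fin.sum_univ_four, Matrix.det_fin_three, Matrix.submatrix_apply]
  simp (config := {decide := true}) [show Fin.succAbove (1 : Fin 4) 2 = 3 by decide]

lemma hdetA1add : (A1 + 1).det ≠ 0 := by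
  have h : A1 + 1 = !![1, 1, 0, 0; 0, 1, 1, 0; 0, 0, 1, 1; 1, -3, 0, 5] := by
    ext i j
    fin_cases i <;> fin_cases j <;>
      simp [A1, Matrix.one_apply, Matrix.vecHead, Matrix.vecTail] <;> norm_num
  rw [h, Matrix.det_succ_row_zero]
  simp only [Fin.sum_univ_four, Matrix.det_fin_three, Matrix.submatrix_apply]
  simp (config := {decide := true}) [show Fin.succAbove (1 : Fin 4) 2 = 3 by decide]
  norm_num

noncomputable def gA1 : GL (Fin 4) ℚ := Matrix.GeneralLinearGroup.mkOfDetNeZero A1 hdetA1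
noncomputable def uA1 : GL (Fin 4) ℚ := Matrix.GeneralLinearGroup.mkOfDetNeZero (A1 - 1) hdetA1sub
noncomputable def vA1 : GL (Fin 4) ℚ := Matrix.GeneralLinearGroup.mkOfDetNeZero (A1 + 1) hdetA1add

noncomputable def B11 : GL (Fin 4) ℚ := (gA1 ^ 2)⁻¹
noncomputable def B12 : GL (Fin 4) ℚ := uA1 ^ 2 * (gA1 ^ 2)⁻¹
noncomputable def B13 : GL (Fin 4) ℚ := uA1 ^ 2 * vA1 * (gA1 ^ 2)⁻¹


section AuxFreeAbelian

/-! ### Auxiliary lemmas for `statement3` -/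

-- numeric log bounds via exp
lemma exp_nat_le_aux' (m : ℕ) : Real.exp m ≤ (2.7182818286 : ℝ) ^ m := by
  calc Real.exp m = Real.exp 1 ^ m := by rw [← Real.exp_nat_mul]; norm_num
  _ ≤ (2.7182818286 : ℝ) ^ m := pow_le_pow_left₀ (Real.exp_pos 1).le Real.exp_one_lt_d9.le m

lemma le_exp_nat_aux' (m : ℕ) : (2.7182818283 : ℝ) ^ m ≤ Real.exp m := by
  calc (2.7182818283 : ℝ) ^ m ≤ Real.exp 1 ^ m :=
        pow_le_pow_left₀ (by norm_num) Real.exp_one_gt_d9.le m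
  _ = Real.exp m := by rw [← Real.exp_nat_mul]; norm_num

lemma lt_log_aux' (x : ℝ) (hx : 0 < x) (n m : ℕ) (hn : 0 < n)
    (h : (2.7182818286 : ℝ) ^ m < x ^ n) : (m : ℝ) / n < Real.log x := by
  have hem : Real.exp m < x ^ n := lt_of_le_of_lt (exp_nat_le_aux' m) h
  have := Real.lt_log_iff_exp_lt (pow_pos hx n) |>.mpr hem
  rw [Real.log_pow] at this
  rw [div_lt_iff₀ (by positivity : (0:ℝ) < (n:ℝ))]
  nlinarith [this]

lemma log_lt_aux' (x : ℝ) (hx : 0 < x) (n m : ℕ) (hn : 0 < n)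
    (h : x ^ n < (2.7182818283 : ℝ) ^ m) : Real.log x < (m : ℝ) / n := by
  have hem : x ^ n < Real.exp m := lt_of_lt_of_le h (le_exp_nat_aux' m)
  have := Real.log_lt_iff_lt_exp (pow_pos hx n) |>.mpr hem
  rw [Real.log_pow] at this
  rw [lt_div_iff₀ (by positivity : (0:ℝ) < (n:ℝ))]
  nlinarith [this]

lemma neg_lt_log_aux' (x : ℝ) (hx : 0 < x) (n m : ℕ) (hn : 0 < n)
    (h : 1 < x ^ n * (2.7182818283 : ℝ) ^ m) : -((m : ℝ) / n) < Real.log x := by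
  have hem : Real.exp (-(m:ℝ)) < x ^ n := by
    rw [Real.exp_neg]
    rw [inv_lt_iff_one_lt_mul₀ (Real.exp_pos _)]
    calc (1:ℝ) < x ^ n * (2.7182818283 : ℝ) ^ m := h
    _ ≤ x ^ n * Real.exp m :=
        mul_le_mul_of_nonneg_left (le_exp_nat_aux' m) (pow_pos hx n).le
  have := Real.lt_log_iff_exp_lt (pow_pos hx n) |>.mpr hem
  rw [Real.log_pow] at this
  rw [← neg_div, div_lt_iff₀ (by positivity : (0:ℝ) < (n:ℝ))]
  nlinarith [this]

lemma log_lt_neg_aux' (x : ℝ) (hx : 0 < x) (n m : ℕ) (hn : 0 < n)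
    (h : x ^ n * (2.7182818286 : ℝ) ^ m < 1) : Real.log x < -((m : ℝ) / n) := by
  have h1 : x ^ n < 1 / (2.7182818286:ℝ) ^ m := (lt_div_iff₀ (by positivity)).mpr h
  have hem : x ^ n < Real.exp (-(m:ℝ)) := by
    refine h1.trans_le ?_
    rw [Real.exp_neg, ← one_div]
    exact one_div_le_one_div_of_le (Real.exp_pos _) (exp_nat_le_aux' m)
  have := Real.log_lt_iff_lt_exp (pow_pos hx n) |>.mpr hem
  rw [Real.log_pow] at this
  rw [← neg_div, lt_div_iff₀ (by positivity : (0:ℝ) < (n:ℝ))]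
  nlinarith [this]

-- versions with a rational bound on x
lemma lt_log_of_le_aux (x q : ℝ) (hq : 0 < q) (hqx : q ≤ x) (n m : ℕ) (hn : 0 < n)
    (h : (2.7182818286 : ℝ) ^ m < q ^ n) : (m : ℝ) / n < Real.log x :=
  lt_log_aux' x (hq.trans_le hqx) n m hn
    (h.trans_le (pow_le_pow_left₀ hq.le hqx n))

lemma log_lt_of_le_aux (x q : ℝ) (hx : 0 < x) (hxq : x ≤ q) (n m : ℕ) (hn : 0 < n)
    (h : q ^ n < (2.7182818283 : ℝ) ^ m) : Real.log x < (m : ℝ) / n :=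
  log_lt_aux' x hx n m hn ((pow_le_pow_left₀ hx.le hxq n).trans_lt h)

lemma neg_lt_log_of_le_aux (x q : ℝ) (hq : 0 < q) (hqx : q ≤ x) (n m : ℕ) (hn : 0 < n)
    (h : 1 < q ^ n * (2.7182818283 : ℝ) ^ m) : -((m : ℝ) / n) < Real.log x :=
  neg_lt_log_aux' x (hq.trans_le hqx) n m hn
    (h.trans_le (mul_le_mul_of_nonneg_right (pow_le_pow_left₀ hq.le hqx n) (by positivity)))

lemma log_lt_neg_of_le_aux (x q : ℝ) (hx : 0 < x) (hxq : x ≤ q) (n m : ℕ) (hn : 0 < n)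
    (h : q ^ n * (2.7182818286 : ℝ) ^ m < 1) : Real.log x < -((m : ℝ) / n) :=
  log_lt_neg_aux' x hx n m hn
    (lt_of_le_of_lt (mul_le_mul_of_nonneg_right (pow_le_pow_left₀ hx.le hxq n) (by positivity)) h)

-- eigenvector machinery
section Eig
variable (w : Fin 4 → ℝ)

def EigU (U : GL (Fin 4) ℝ) (μ : ℝˣ) : Prop :=
  (U : Matrix (Fin 4) (Fin 4) ℝ) *ᵥ w = (μ : ℝ) • w

variable {w}

lemma EigU.mul {U V : GL (Fin 4) ℝ} {μ ν : ℝˣ} (hU : EigU w U μ) (hV : EigU w V ν) :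
    EigU w (U * V) (μ * ν) := by
  unfold EigU at *
  rw [Units.val_mul, Units.val_mul, ← Matrix.mulVec_mulVec, hV, Matrix.mulVec_smul, hU,
    smul_smul, mul_comm (ν:ℝ)]

lemma EigU.inv {U : GL (Fin 4) ℝ} {μ : ℝˣ} (hU : EigU w U μ) : EigU w U⁻¹ μ⁻¹ := by
  unfold EigU at *
  have h1 : ((U⁻¹ : GL (Fin 4) ℝ) : Matrix (Fin 4) (Fin 4) ℝ) *ᵥ ((U : Matrix (Fin 4) (Fin 4) ℝ) *ᵥ w) = w := by
    rw [Matrix.mulVec_mulVec, ← Units.val_mul, inv_mul_cancel]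
    simp
  rw [hU, Matrix.mulVec_smul] at h1
  rw [Units.val_inv_eq_inv_val]
  calc ((U⁻¹ : GL (Fin 4) ℝ) : Matrix (Fin 4) (Fin 4) ℝ) *ᵥ w
      = (μ:ℝ)⁻¹ • ((μ:ℝ) • (((U⁻¹ : GL (Fin 4) ℝ) : Matrix (Fin 4) (Fin 4) ℝ) *ᵥ w)) := by
        rw [smul_smul, inv_mul_cancel₀ (Units.ne_zero μ), one_smul]
    _ = (μ:ℝ)⁻¹ • w := by rw [h1]

lemma EigU.pow {U : GL (Fin 4) ℝ} {μ : ℝˣ} (hU : EigU w U μ) (n : ℕ) :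
    EigU w (U ^ n) (μ ^ n) := by
  induction n with
  | zero => simp [EigU, Matrix.one_mulVec]
  | succ n ih => rw [pow_succ, pow_succ]; exact ih.mul hU

lemma EigU.zpow {U : GL (Fin 4) ℝ} {μ : ℝˣ} (hU : EigU w U μ) (n : ℤ) :
    EigU w (U ^ n) (μ ^ n) := by
  cases n with
  | ofNat n => simpa [zpow_natCast] using hU.pow n
  | negSucc n => simpa [zpow_negSucc] using (hU.pow (n+1)).inv

end Eig

noncomputable def φA : Matrix (Fin 4) (Fin 4) ℚ →* Matrix (Fin 4) (Fin 4) ℝ :=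
  ((algebraMap ℚ ℝ).mapMatrix).toMonoidHom

lemma phiA1 : φA A1 = !![0, 1, 0, 0; 0, 0, 1, 0; 0, 0, 0, 1; 1, -3, 0, 4] := by
  ext i j
  fin_cases i <;> fin_cases j <;>
    norm_num [φA, A1, RingHom.mapMatrix_apply, Matrix.map_apply, Matrix.vecHead, Matrix.vecTail]

lemma keyFreeAbelian (lam : ℝ) (hroot : lam^4 - 4*lam^3 + 3*lam - 1 = 0) (h0 : lam ≠ 0)
    (hm : lam - 1 ≠ 0) (hp : lam + 1 ≠ 0) (i j k : ℤ)
    (h : B11 ^ i * B12 ^ j * B13 ^ k = 1) :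
    (i:ℝ) * (-2 * Real.log lam) + (j:ℝ) * (2 * Real.log (lam-1) - 2 * Real.log lam)
      + (k:ℝ) * (2 * Real.log (lam-1) + Real.log (lam+1) - 2 * Real.log lam) = 0 := by
  set w : Fin 4 → ℝ := ![1, lam, lam^2, lam^3] with hw
  set G := Units.map φA gA1
  set U := Units.map φA uA1
  set V := Units.map φA vA1
  have hA : φA A1 *ᵥ w = lam • w := by
    rw [phiA1]
    funext x
    fin_cases x <;>
      simp [hw, Matrix.mulVec, dotProduct, Fin.sum_univ_succ] <;> ring_nf <;>
      linarith [hroot]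
  have hG : EigU w G (Units.mk0 lam h0) := by
    show (↑G : Matrix (Fin 4) (Fin 4) ℝ) *ᵥ w = _
    have h1 : (↑G : Matrix (Fin 4) (Fin 4) ℝ) = φA A1 := rfl
    rw [h1, hA, Units.val_mk0]
  have hU : EigU w U (Units.mk0 (lam - 1) hm) := by
    show (↑U : Matrix (Fin 4) (Fin 4) ℝ) *ᵥ w = _
    have h1 : (↑U : Matrix (Fin 4) (Fin 4) ℝ) = φA A1 - 1 := by
      show (algebraMap ℚ ℝ).mapMatrix (A1 - 1) = _
      rw [map_sub, _root_.map_one]; rfl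
    rw [h1, Matrix.sub_mulVec, Matrix.one_mulVec, hA, Units.val_mk0, sub_smul, one_smul]
  have hV : EigU w V (Units.mk0 (lam + 1) hp) := by
    show (↑V : Matrix (Fin 4) (Fin 4) ℝ) *ᵥ w = _
    have h1 : (↑V : Matrix (Fin 4) (Fin 4) ℝ) = φA A1 + 1 := by
      show (algebraMap ℚ ℝ).mapMatrix (A1 + 1) = _
      rw [map_add, _root_.map_one]; rfl
    rw [h1, Matrix.add_mulVec, Matrix.one_mulVec, hA, Units.val_mk0, add_smul, one_smul]
  set μ := Units.mk0 lam h0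
  set α := Units.mk0 (lam - 1) hm
  set β := Units.mk0 (lam + 1) hp
  have hmap : Units.map φA (B11 ^ i * B12 ^ j * B13 ^ k)
      = ((G^2)⁻¹)^i * (U^2 * (G^2)⁻¹)^j * (U^2 * V * (G^2)⁻¹)^k := by
    simp [B11, B12, B13, _root_.map_mul, map_zpow, _root_.map_pow, map_inv, G, U, V]
  have heig : EigU w (((G^2)⁻¹)^i * (U^2 * (G^2)⁻¹)^j * (U^2 * V * (G^2)⁻¹)^k)
      ((((μ^2)⁻¹)^i * ((α^2 * (μ^2)⁻¹))^j * ((α^2 * β * (μ^2)⁻¹))^k)) :=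
    ((((hG.pow 2).inv).zpow i).mul ((((hU.pow 2).mul ((hG.pow 2).inv))).zpow j)).mul
      (((((hU.pow 2).mul hV).mul ((hG.pow 2).inv))).zpow k)
  rw [h, _root_.map_one] at hmap
  rw [← hmap] at heig
  have hone : (((μ^2)⁻¹)^i * ((α^2 * (μ^2)⁻¹))^j * ((α^2 * β * (μ^2)⁻¹))^k) = 1 := by
    have h1 : w = ((((μ^2)⁻¹)^i * ((α^2 * (μ^2)⁻¹))^j * ((α^2 * β * (μ^2)⁻¹))^k : ℝˣ) : ℝ) • w := by
      have := heig
      unfold EigU at this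
      rw [Units.val_one, Matrix.one_mulVec] at this
      exact this
    have h2 := congrFun h1 0
    have hw0 : w 0 = 1 := by rw [hw]; rfl
    rw [Pi.smul_apply, hw0, smul_eq_mul, mul_one] at h2
    exact Units.val_eq_one.mp h2.symm
  have hreal : ((lam^2)⁻¹)^(i:ℤ) * ((lam-1)^2 * (lam^2)⁻¹)^(j:ℤ)
      * ((lam-1)^2 * (lam+1) * (lam^2)⁻¹)^(k:ℤ) = (1:ℝ) := by
    have := congrArg Units.val hone
    simpa [Units.val_zpow_eq_zpow_val, Units.val_mul, Units.val_inv_eq_inv_val,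
      Units.val_pow_eq_pow_val, Units.val_mk0, μ, α, β] using this
  have n1 : ((lam^2)⁻¹ : ℝ) ≠ 0 := by positivity
  have n2 : ((lam-1)^2 * (lam^2)⁻¹ : ℝ) ≠ 0 := by positivity
  have n3 : ((lam-1)^2 * (lam+1) * (lam^2)⁻¹ : ℝ) ≠ 0 :=
    mul_ne_zero (mul_ne_zero (pow_ne_zero 2 hm) hp) n1
  have hlog := congrArg Real.log hreal
  rw [Real.log_one, Real.log_mul (mul_ne_zero (zpow_ne_zero i n1) (zpow_ne_zero j n2))
      (zpow_ne_zero k n3),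
    Real.log_mul (zpow_ne_zero i n1) (zpow_ne_zero j n2),
    Real.log_zpow, Real.log_zpow, Real.log_zpow,
    Real.log_inv, Real.log_pow,
    Real.log_mul (pow_ne_zero 2 hm) n1,
    Real.log_mul (mul_ne_zero (pow_ne_zero 2 hm) hp) n1,
    Real.log_mul (pow_ne_zero 2 hm) hp,
    Real.log_inv, Real.log_pow, Real.log_pow] at hlog
  push_cast at hlog ⊢
  linarith [hlog]

end AuxFreeAbelian

set_option maxHeartbeats 4000000 in
theorem statement3 (i j k : ℤ) (h : B11 ^ i * B12 ^ j * B13 ^ k = 1) :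
    i = 0 ∧ j = 0 ∧ k = 0 := by
  have hcont : Continuous (fun x : ℝ => x^4 - 4*x^3 + 3*x - 1) := by continuity
  -- root 1 in [-0.92, -0.91], f decreasing sign: f(-0.92) ≥ 0 ≥ f(-0.91)
  obtain ⟨lam1, hmem1, hfl1⟩ :=
    intermediate_value_Icc' (by norm_num : (-92/100 : ℝ) ≤ -91/100) hcont.continuousOn
      (Set.mem_Icc.mpr ⟨by norm_num, by norm_num⟩ :
        (0:ℝ) ∈ Set.Icc ((fun x : ℝ => x^4 - 4*x^3 + 3*x - 1) (-91/100))
          ((fun x : ℝ => x^4 - 4*x^3 + 3*x - 1) (-92/100)))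
  obtain ⟨lam2, hmem2, hfl2⟩ :=
    intermediate_value_Icc (by norm_num : (42/100 : ℝ) ≤ 43/100) hcont.continuousOn
      (Set.mem_Icc.mpr ⟨by norm_num, by norm_num⟩ :
        (0:ℝ) ∈ Set.Icc ((fun x : ℝ => x^4 - 4*x^3 + 3*x - 1) (42/100))
          ((fun x : ℝ => x^4 - 4*x^3 + 3*x - 1) (43/100)))
  obtain ⟨lam3, hmem3, hfl3⟩ :=
    intermediate_value_Icc' (by norm_num : (67/100 : ℝ) ≤ 68/100) hcont.continuousOn
      (Set.mem_Icc.mpr ⟨by norm_num, by norm_num⟩ :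
        (0:ℝ) ∈ Set.Icc ((fun x : ℝ => x^4 - 4*x^3 + 3*x - 1) (68/100))
          ((fun x : ℝ => x^4 - 4*x^3 + 3*x - 1) (67/100)))
  have hb1 := Set.mem_Icc.mp hmem1
  have hb2 := Set.mem_Icc.mp hmem2
  have hb3 := Set.mem_Icc.mp hmem3
  have hroot1 : lam1^4 - 4*lam1^3 + 3*lam1 - 1 = 0 := hfl1
  have hroot2 : lam2^4 - 4*lam2^3 + 3*lam2 - 1 = 0 := hfl2
  have hroot3 : lam3^4 - 4*lam3^3 + 3*lam3 - 1 = 0 := hfl3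
  have E1 := keyFreeAbelian lam1 hroot1 (ne_of_lt (by linarith only [hb1.2]))
    (ne_of_lt (by linarith only [hb1.2])) (ne_of_gt (by linarith only [hb1.1])) i j k h
  have E2 := keyFreeAbelian lam2 hroot2 (ne_of_gt (by linarith only [hb2.1]))
    (ne_of_lt (by linarith only [hb2.2])) (ne_of_gt (by linarith only [hb2.1])) i j k h
  have E3 := keyFreeAbelian lam3 hroot3 (ne_of_gt (by linarith only [hb3.1]))
    (ne_of_lt (by linarith only [hb3.2])) (ne_of_gt (by linarith only [hb3.1])) i j k h
  set X1 := Real.log (lam1 - 1) with hX1def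
  set Y1 := Real.log (lam1 + 1) with hY1def
  set Z1 := Real.log lam1 with hZ1def
  set X2 := Real.log (lam2 - 1) with hX2def
  set Y2 := Real.log (lam2 + 1) with hY2def
  set Z2 := Real.log lam2 with hZ2def
  set X3 := Real.log (lam3 - 1) with hX3def
  set Y3 := Real.log (lam3 + 1) with hY3def
  set Z3 := Real.log lam3 with hZ3def
  -- log bounds
  have hX1eq : X1 = Real.log (1 - lam1) := by
    rw [hX1def, show (1:ℝ) - lam1 = -(lam1 - 1) by ring, Real.log_neg_eq_log]
  have hZ1eq : Z1 = Real.log (-lam1) := by rw [hZ1def, Real.log_neg_eq_log]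
  have hX2eq : X2 = Real.log (1 - lam2) := by
    rw [hX2def, show (1:ℝ) - lam2 = -(lam2 - 1) by ring, Real.log_neg_eq_log]
  have hX3eq : X3 = Real.log (1 - lam3) := by
    rw [hX3def, show (1:ℝ) - lam3 = -(lam3 - 1) by ring, Real.log_neg_eq_log]
  have hX1lo : (32:ℝ)/50 < X1 := by
    rw [hX1eq]
    exact lt_log_of_le_aux _ (191/100) (by norm_num) (by linarith only [hb1.2]) 50 32
      (by norm_num) (by norm_num)
  have hX1hi : X1 < (33:ℝ)/50 := by
    rw [hX1eq]
    exact log_lt_of_le_aux _ (192/100) (by linarith only [hb1.2]) (by linarith only [hb1.1]) 50 33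
      (by norm_num) (by norm_num)
  have hY1lo : -((127:ℝ)/50) < Y1 := by
    rw [hY1def]
    exact neg_lt_log_of_le_aux _ (8/100) (by norm_num) (by linarith only [hb1.1]) 50 127
      (by norm_num) (by norm_num)
  have hY1hi : Y1 < -((120:ℝ)/50) := by
    rw [hY1def]
    exact log_lt_neg_of_le_aux _ (9/100) (by linarith only [hb1.1]) (by linarith only [hb1.2]) 50 120
      (by norm_num) (by norm_num)
  have hZ1lo : -((5:ℝ)/50) < Z1 := by
    rw [hZ1eq]
    exact neg_lt_log_of_le_aux _ (91/100) (by norm_num) (by linarith only [hb1.2]) 50 5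
      (by norm_num) (by norm_num)
  have hZ1hi : Z1 < -((4:ℝ)/50) := by
    rw [hZ1eq]
    exact log_lt_neg_of_le_aux _ (92/100) (by linarith only [hb1.2]) (by linarith only [hb1.1]) 50 4
      (by norm_num) (by norm_num)
  have hX2lo : -((29:ℝ)/50) < X2 := by
    rw [hX2eq]
    exact neg_lt_log_of_le_aux _ (57/100) (by norm_num) (by linarith only [hb2.2]) 50 29
      (by norm_num) (by norm_num)
  have hX2hi : X2 < -((27:ℝ)/50) := by
    rw [hX2eq]
    exact log_lt_neg_of_le_aux _ (58/100) (by linarith only [hb2.2]) (by linarith only [hb2.1]) 50 27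
      (by norm_num) (by norm_num)
  have hY2lo : (17:ℝ)/50 < Y2 := by
    rw [hY2def]
    exact lt_log_of_le_aux _ (142/100) (by norm_num) (by linarith only [hb2.1]) 50 17
      (by norm_num) (by norm_num)
  have hY2hi : Y2 < (18:ℝ)/50 := by
    rw [hY2def]
    exact log_lt_of_le_aux _ (143/100) (by linarith only [hb2.1]) (by linarith only [hb2.2]) 50 18
      (by norm_num) (by norm_num)
  have hZ2lo : -((44:ℝ)/50) < Z2 := by
    rw [hZ2def]
    exact neg_lt_log_of_le_aux _ (42/100) (by norm_num) (by linarith only [hb2.1]) 50 44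
      (by norm_num) (by norm_num)
  have hZ2hi : Z2 < -((42:ℝ)/50) := by
    rw [hZ2def]
    exact log_lt_neg_of_le_aux _ (43/100) (by linarith only [hb2.1]) (by linarith only [hb2.2]) 50 42
      (by norm_num) (by norm_num)
  have hX3lo : -((57:ℝ)/50) < X3 := by
    rw [hX3eq]
    exact neg_lt_log_of_le_aux _ (32/100) (by norm_num) (by linarith only [hb3.2]) 50 57
      (by norm_num) (by norm_num)
  have hX3hi : X3 < -((55:ℝ)/50) := by
    rw [hX3eq]
    exact log_lt_neg_of_le_aux _ (33/100) (by linarith only [hb3.2]) (by linarith only [hb3.1]) 50 55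
      (by norm_num) (by norm_num)
  have hY3lo : (25:ℝ)/50 < Y3 := by
    rw [hY3def]
    exact lt_log_of_le_aux _ (167/100) (by norm_num) (by linarith only [hb3.1]) 50 25
      (by norm_num) (by norm_num)
  have hY3hi : Y3 < (26:ℝ)/50 := by
    rw [hY3def]
    exact log_lt_of_le_aux _ (168/100) (by linarith only [hb3.1]) (by linarith only [hb3.2]) 50 26
      (by norm_num) (by norm_num)
  have hZ3lo : -((21:ℝ)/50) < Z3 := by
    rw [hZ3def]
    exact neg_lt_log_of_le_aux _ (67/100) (by norm_num) (by linarith only [hb3.1]) 50 21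
      (by norm_num) (by norm_num)
  have hZ3hi : Z3 < -((19:ℝ)/50) := by
    rw [hZ3def]
    exact log_lt_neg_of_le_aux _ (68/100) (by linarith only [hb3.1]) (by linarith only [hb3.2]) 50 19
      (by norm_num) (by norm_num)
  have m1lo : (-867/1250 : ℝ) ≤ (2*X2 - 2*Z2) * (2*X3 + Y3 - 2*Z3) := by nlinarith only [hX2lo, hZ2lo, hX2hi, hZ2hi, hX3lo, hY3lo, hZ3lo, hX3hi, hY3hi, hZ3hi, mul_nonneg (by linarith only [hX2lo, hZ2lo, hX2hi, hZ2hi, hX3lo, hY3lo, hZ3lo, hX3hi, hY3hi, hZ3hi] : (0:ℝ) ≤ (2*X2 - 2*Z2) - (13/25 : ℝ)) (by linarith only [hX2lo, hZ2lo, hX2hi, hZ2hi, hX3lo, hY3lo, hZ3lo, hX3hi, hY3hi, hZ3hi] : (0:ℝ) ≤ (2*X3 + Y3 - 2*Z3) - (-51/50 : ℝ)), mul_nonneg (by linarith only [hX2lo, hZ2lo, hX2hi, hZ2hi, hX3lo, hY3lo, hZ3lo, hX3hi, hY3hi, hZ3hi] : (0:ℝ) ≤ (17/25 : ℝ) - (2*X2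 - 2*Z2)) (by linarith only [hX2lo, hZ2lo, hX2hi, hZ2hi, hX3lo, hY3lo, hZ3lo, hX3hi, hY3hi, hZ3hi] : (0:ℝ) ≤ (2*X3 + Y3 - 2*Z3) - (-51/50 : ℝ)), mul_nonneg (by linarith only [hX2lo, hZ2lo, hX2hi, hZ2hi, hX3lo, hY3lo, hZ3lo, hX3hi, hY3hi, hZ3hi] : (0:ℝ) ≤ (17/25 : ℝ) - (2*X2 - 2*Z2)) (by linarith only [hX2lo, hZ2lo, hX2hi, hZ2hi, hX3lo, hY3lo, hZ3lo, hX3hi, hY3hi, hZ3hi] : (0:ℝ) ≤ (-21/25 : ℝ) - (2*X3 + Y3 - 2*Z3)), mul_nonneg (by linarith only [hX2lo, hZ2lo, hX2hi, hZ2hi, hX3lo, hY3lo, hZ3lo, hX3hi, hY3hi, hZ3hi] : (0:ℝ) ≤ (2*X2 - 2*Z2) - (13/25 : ℝ)) (by linarith only [hX2lo, hZ2lo, hX2hi, hZ2hi, hX3lo, hY3lo, hZ3lo, hX3hi, hY3hi, hZ3hi] : (0:ℝ) ≤ (-21/25 : ℝ) - (2*X3 + Y3 - 2*Z3))]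
  have m1hi : (2*X2 - 2*Z2) * (2*X3 + Y3 - 2*Z3) ≤ (-273/625 : ℝ) := by nlinarith only [hX2lo, hZ2lo, hX2hi, hZ2hi, hX3lo, hY3lo, hZ3lo, hX3hi, hY3hi, hZ3hi, mul_nonneg (by linarith only [hX2lo, hZ2lo, hX2hi, hZ2hi, hX3lo, hY3lo, hZ3lo, hX3hi, hY3hi, hZ3hi] : (0:ℝ) ≤ (2*X2 - 2*Z2) - (13/25 : ℝ)) (by linarith only [hX2lo, hZ2lo, hX2hi, hZ2hi, hX3lo, hY3lo, hZ3lo, hX3hi, hY3hi, hZ3hi] : (0:ℝ) ≤ (2*X3 + Y3 - 2*Z3) - (-51/50 : ℝ)), mul_nonneg (by linarith only [hX2lo, hZ2lo, hX2hi, hZ2hi, hX3lo, hY3lo, hZ3lo, hX3hi, hY3hi, hZ3hi] : (0:ℝ) ≤ (17/25 : ℝ) - (2*X2 - 2*Z2)) (by linarith only [hX2lo, hZ2lo, hX2hi, hZ2hi, hX3lo, hY3lo, hZ3lo, hX3hi, hY3hi, hZ3hi] : (0:ℝ) ≤ (2*X3 + Y3 - 2*Z3) - (-51/50 : ℝ)),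 mul_nonneg (by linarith only [hX2lo, hZ2lo, hX2hi, hZ2hi, hX3lo, hY3lo, hZ3lo, hX3hi, hY3hi, hZ3hi] : (0:ℝ) ≤ (17/25 : ℝ) - (2*X2 - 2*Z2)) (by linarith only [hX2lo, hZ2lo, hX2hi, hZ2hi, hX3lo, hY3lo, hZ3lo, hX3hi, hY3hi, hZ3hi] : (0:ℝ) ≤ (-21/25 : ℝ) - (2*X3 + Y3 - 2*Z3)), mul_nonneg (by linarith only [hX2lo, hZ2lo, hX2hi, hZ2hi, hX3lo, hY3lo, hZ3lo, hX3hi, hY3hi, hZ3hi] : (0:ℝ) ≤ (2*X2 - 2*Z2) - (13/25 : ℝ)) (by linarith only [hX2lo, hZ2lo, hX2hi, hZ2hi, hX3lo, hY3lo, hZ3lo, hX3hi, hY3hi, hZ3hi] : (0:ℝ) ≤ (-21/25 : ℝ) - (2*X3 + Y3 - 2*Z3))]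
  have m2lo : (-988/625 : ℝ) ≤ (2*X3 - 2*Z3) * (2*X2 + Y2 - 2*Z2) := by nlinarith only [hX3lo, hZ3lo, hX3hi, hZ3hi, hX2lo, hY2lo, hZ2lo, hX2hi, hY2hi, hZ2hi, mul_nonneg (by linarith only [hX3lo, hZ3lo, hX3hi, hZ3hi, hX2lo, hY2lo, hZ2lo, hX2hi, hY2hi, hZ2hi] : (0:ℝ) ≤ (2*X3 - 2*Z3) - (-38/25 : ℝ)) (by linarith only [hX3lo, hZ3lo, hX3hi, hZ3hi, hX2lo, hY2lo, hZ2lo, hX2hi, hY2hi, hZ2hi] : (0:ℝ) ≤ (2*X2 + Y2 - 2*Z2) - (43/50 : ℝ)), mul_nonneg (by linarith only [hX3lo, hZ3lo, hX3hi, hZ3hi, hX2lo, hY2lo, hZ2lo, hX2hi, hY2hi, hZ2hi] : (0:ℝ) ≤ (-34/25 : ℝ) - (2*X3 - 2*Z3)) (by linarith only [hX3lo, hZ3lo, hX3hi, hZ3hi, hX2lo, hY2lo, hZ2lo, hX2hi, hY2hi, hZ2hi] : (0:ℝ) ≤ (2*X2 + Y2 - 2*Z2) - (43/50 : ℝ)),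 mul_nonneg (by linarith only [hX3lo, hZ3lo, hX3hi, hZ3hi, hX2lo, hY2lo, hZ2lo, hX2hi, hY2hi, hZ2hi] : (0:ℝ) ≤ (-34/25 : ℝ) - (2*X3 - 2*Z3)) (by linarith only [hX3lo, hZ3lo, hX3hi, hZ3hi, hX2lo, hY2lo, hZ2lo, hX2hi, hY2hi, hZ2hi] : (0:ℝ) ≤ (26/25 : ℝ) - (2*X2 + Y2 - 2*Z2)), mul_nonneg (by linarith only [hX3lo, hZ3lo, hX3hi, hZ3hi, hX2lo, hY2lo, hZ2lo, hX2hi, hY2hi, hZ2hi] : (0:ℝ) ≤ (2*X3 - 2*Z3) - (-38/25 : ℝ)) (by linarith only [hX3lo, hZ3lo, hX3hi, hZ3hi, hX2lo, hY2lo, hZ2lo, hX2hi, hY2hi, hZ2hi] : (0:ℝ) ≤ (26/25 : ℝ) - (2*X2 + Y2 - 2*Z2))]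
  have m2hi : (2*X3 - 2*Z3) * (2*X2 + Y2 - 2*Z2) ≤ (-731/625 : ℝ) := by nlinarith only [hX3lo, hZ3lo, hX3hi, hZ3hi, hX2lo, hY2lo, hZ2lo, hX2hi, hY2hi, hZ2hi, mul_nonneg (by linarith only [hX3lo, hZ3lo, hX3hi, hZ3hi, hX2lo, hY2lo, hZ2lo, hX2hi, hY2hi, hZ2hi] : (0:ℝ) ≤ (2*X3 - 2*Z3) - (-38/25 : ℝ)) (by linarith only [hX3lo, hZ3lo, hX3hi, hZ3hi, hX2lo, hY2lo, hZ2lo, hX2hi, hY2hi, hZ2hi] : (0:ℝ) ≤ (2*X2 + Y2 - 2*Z2) - (43/50 : ℝ)), mul_nonneg (by linarith only [hX3lo, hZ3lo, hX3hi, hZ3hi, hX2lo, hY2lo, hZ2lo, hX2hi, hY2hi, hZ2hi] : (0:ℝ) ≤ (-34/25 : ℝ) - (2*X3 - 2*Z3)) (by linarith only [hX3lo, hZ3lo, hX3hi, hZ3hi, hX2lo, hY2lo, hZ2lo, hX2hi, hY2hi, hZ2hi] : (0:ℝ) ≤ (2*X2 + Y2 - 2*Z2) - (43/50 : ℝ)),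 mul_nonneg (by linarith only [hX3lo, hZ3lo, hX3hi, hZ3hi, hX2lo, hY2lo, hZ2lo, hX2hi, hY2hi, hZ2hi] : (0:ℝ) ≤ (-34/25 : ℝ) - (2*X3 - 2*Z3)) (by linarith only [hX3lo, hZ3lo, hX3hi, hZ3hi, hX2lo, hY2lo, hZ2lo, hX2hi, hY2hi, hZ2hi] : (0:ℝ) ≤ (26/25 : ℝ) - (2*X2 + Y2 - 2*Z2)), mul_nonneg (by linarith only [hX3lo, hZ3lo, hX3hi, hZ3hi, hX2lo, hY2lo, hZ2lo, hX2hi, hY2hi, hZ2hi] : (0:ℝ) ≤ (2*X3 - 2*Z3) - (-38/25 : ℝ)) (by linarith only [hX3lo, hZ3lo, hX3hi, hZ3hi, hX2lo, hY2lo, hZ2lo, hX2hi, hY2hi, hZ2hi] : (0:ℝ) ≤ (26/25 : ℝ) - (2*X2 + Y2 - 2*Z2))]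
  have m3lo : (748/625 : ℝ) ≤ (2*X3 - 2*Z3) * (2*X1 + Y1 - 2*Z1) := by nlinarith only [hX3lo, hZ3lo, hX3hi, hZ3hi, hX1lo, hY1lo, hZ1lo, hX1hi, hY1hi, hZ1hi, mul_nonneg (by linarith only [hX3lo, hZ3lo, hX3hi, hZ3hi, hX1lo, hY1lo, hZ1lo, hX1hi, hY1hi, hZ1hi] : (0:ℝ) ≤ (2*X3 - 2*Z3) - (-38/25 : ℝ)) (by linarith only [hX3lo, hZ3lo, hX3hi, hZ3hi, hX1lo, hY1lo, hZ1lo, hX1hi, hY1hi, hZ1hi] : (0:ℝ) ≤ (2*X1 + Y1 - 2*Z1) - (-11/10 : ℝ)), mul_nonneg (by linarith only [hX3lo, hZ3lo, hX3hi, hZ3hi, hX1lo, hY1lo, hZ1lo, hX1hi, hY1hi, hZ1hi] : (0:ℝ) ≤ (-34/25 : ℝ) - (2*X3 - 2*Z3)) (by linarith only [hX3lo, hZ3lo, hX3hi, hZ3hi, hX1lo, hY1lo, hZ1lo, hX1hi, hY1hi, hZ1hi] : (0:ℝ) ≤ (2*X1 + Y1 - 2*Z1) - (-11/10 : ℝ)),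 mul_nonneg (by linarith only [hX3lo, hZ3lo, hX3hi, hZ3hi, hX1lo, hY1lo, hZ1lo, hX1hi, hY1hi, hZ1hi] : (0:ℝ) ≤ (-34/25 : ℝ) - (2*X3 - 2*Z3)) (by linarith only [hX3lo, hZ3lo, hX3hi, hZ3hi, hX1lo, hY1lo, hZ1lo, hX1hi, hY1hi, hZ1hi] : (0:ℝ) ≤ (-22/25 : ℝ) - (2*X1 + Y1 - 2*Z1)), mul_nonneg (by linarith only [hX3lo, hZ3lo, hX3hi, hZ3hi, hX1lo, hY1lo, hZ1lo, hX1hi, hY1hi, hZ1hi] : (0:ℝ) ≤ (2*X3 - 2*Z3) - (-38/25 : ℝ)) (by linarith only [hX3lo, hZ3lo, hX3hi, hZ3hi, hX1lo, hY1lo, hZ1lo, hX1hi, hY1hi, hZ1hi] : (0:ℝ) ≤ (-22/25 : ℝ) - (2*X1 + Y1 - 2*Z1))]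
  have m3hi : (2*X3 - 2*Z3) * (2*X1 + Y1 - 2*Z1) ≤ (209/125 : ℝ) := by nlinarith only [hX3lo, hZ3lo, hX3hi, hZ3hi, hX1lo, hY1lo, hZ1lo, hX1hi, hY1hi, hZ1hi, mul_nonneg (by linarith only [hX3lo, hZ3lo, hX3hi, hZ3hi, hX1lo, hY1lo, hZ1lo, hX1hi, hY1hi, hZ1hi] : (0:ℝ) ≤ (2*X3 - 2*Z3) - (-38/25 : ℝ)) (by linarith only [hX3lo, hZ3lo, hX3hi, hZ3hi, hX1lo, hY1lo, hZ1lo, hX1hi, hY1hi, hZ1hi] : (0:ℝ) ≤ (2*X1 + Y1 - 2*Z1) - (-11/10 : ℝ)), mul_nonneg (by linarith only [hX3lo, hZ3lo, hX3hi, hZ3hi, hX1lo, hY1lo, hZ1lo, hX1hi, hY1hi, hZ1hi] : (0:ℝ) ≤ (-34/25 : ℝ) - (2*X3 - 2*Z3)) (by linarith only [hX3lo, hZ3lo, hX3hi, hZ3hi, hX1lo, hY1lo, hZ1lo, hX1hi, hY1hi, hZ1hi] : (0:ℝ) ≤ (2*X1 + Y1 - 2*Z1) - (-11/10 : ℝ)),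 mul_nonneg (by linarith only [hX3lo, hZ3lo, hX3hi, hZ3hi, hX1lo, hY1lo, hZ1lo, hX1hi, hY1hi, hZ1hi] : (0:ℝ) ≤ (-34/25 : ℝ) - (2*X3 - 2*Z3)) (by linarith only [hX3lo, hZ3lo, hX3hi, hZ3hi, hX1lo, hY1lo, hZ1lo, hX1hi, hY1hi, hZ1hi] : (0:ℝ) ≤ (-22/25 : ℝ) - (2*X1 + Y1 - 2*Z1)), mul_nonneg (by linarith only [hX3lo, hZ3lo, hX3hi, hZ3hi, hX1lo, hY1lo, hZ1lo, hX1hi, hY1hi, hZ1hi] : (0:ℝ) ≤ (2*X3 - 2*Z3) - (-38/25 : ℝ)) (by linarith only [hX3lo, hZ3lo, hX3hi, hZ3hi, hX1lo, hY1lo, hZ1lo, hX1hi, hY1hi, hZ1hi] : (0:ℝ) ≤ (-22/25 : ℝ) - (2*X1 + Y1 - 2*Z1))]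
  have m4lo : (-969/625 : ℝ) ≤ (2*X1 - 2*Z1) * (2*X3 + Y3 - 2*Z3) := by nlinarith only [hX1lo, hZ1lo, hX1hi, hZ1hi, hX3lo, hY3lo, hZ3lo, hX3hi, hY3hi, hZ3hi, mul_nonneg (by linarith only [hX1lo, hZ1lo, hX1hi, hZ1hi, hX3lo, hY3lo, hZ3lo, hX3hi, hY3hi, hZ3hi] : (0:ℝ) ≤ (2*X1 - 2*Z1) - (36/25 : ℝ)) (by linarith only [hX1lo, hZ1lo, hX1hi, hZ1hi, hX3lo, hY3lo, hZ3lo, hX3hi, hY3hi, hZ3hi] : (0:ℝ) ≤ (2*X3 + Y3 - 2*Z3) - (-51/50 : ℝ)), mul_nonneg (by linarith only [hX1lo, hZ1lo, hX1hi, hZ1hi, hX3lo, hY3lo, hZ3lo, hX3hi, hY3hi, hZ3hi] : (0:ℝ) ≤ (38/25 : ℝ) - (2*X1 - 2*Z1)) (by linarith only [hX1lo, hZ1lo, hX1hi, hZ1hi, hX3lo, hY3lo, hZ3lo, hX3hi, hY3hi, hZ3hi] : (0:ℝ) ≤ (2*X3 + Y3 - 2*Z3) - (-51/50 : ℝ)),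 mul_nonneg (by linarith only [hX1lo, hZ1lo, hX1hi, hZ1hi, hX3lo, hY3lo, hZ3lo, hX3hi, hY3hi, hZ3hi] : (0:ℝ) ≤ (38/25 : ℝ) - (2*X1 - 2*Z1)) (by linarith only [hX1lo, hZ1lo, hX1hi, hZ1hi, hX3lo, hY3lo, hZ3lo, hX3hi, hY3hi, hZ3hi] : (0:ℝ) ≤ (-21/25 : ℝ) - (2*X3 + Y3 - 2*Z3)), mul_nonneg (by linarith only [hX1lo, hZ1lo, hX1hi, hZ1hi, hX3lo, hY3lo, hZ3lo, hX3hi, hY3hi, hZ3hi] : (0:ℝ) ≤ (2*X1 - 2*Z1) - (36/25 : ℝ)) (by linarith only [hX1lo, hZ1lo, hX1hi, hZ1hi, hX3lo, hY3lo, hZ3lo, hX3hi, hY3hi, hZ3hi] : (0:ℝ) ≤ (-21/25 : ℝ) - (2*X3 + Y3 - 2*Z3))]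
  have m4hi : (2*X1 - 2*Z1) * (2*X3 + Y3 - 2*Z3) ≤ (-756/625 : ℝ) := by nlinarith only [hX1lo, hZ1lo, hX1hi, hZ1hi, hX3lo, hY3lo, hZ3lo, hX3hi, hY3hi, hZ3hi, mul_nonneg (by linarith only [hX1lo, hZ1lo, hX1hi, hZ1hi, hX3lo, hY3lo, hZ3lo, hX3hi, hY3hi, hZ3hi] : (0:ℝ) ≤ (2*X1 - 2*Z1) - (36/25 : ℝ)) (by linarith only [hX1lo, hZ1lo, hX1hi, hZ1hi, hX3lo, hY3lo, hZ3lo, hX3hi, hY3hi, hZ3hi] : (0:ℝ) ≤ (2*X3 + Y3 - 2*Z3) - (-51/50 : ℝ)), mul_nonneg (by linarith only [hX1lo, hZ1lo, hX1hi, hZ1hi, hX3lo, hY3lo, hZ3lo, hX3hi, hY3hi, hZ3hi] : (0:ℝ) ≤ (38/25 : ℝ) - (2*X1 - 2*Z1)) (by linarith only [hX1lo, hZ1lo, hX1hi, hZ1hi, hX3lo, hY3lo, hZ3lo, hX3hi, hY3hi, hZ3hi] : (0:ℝ) ≤ (2*X3 + Y3 - 2*Z3) - (-51/50 : ℝ)),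 mul_nonneg (by linarith only [hX1lo, hZ1lo, hX1hi, hZ1hi, hX3lo, hY3lo, hZ3lo, hX3hi, hY3hi, hZ3hi] : (0:ℝ) ≤ (38/25 : ℝ) - (2*X1 - 2*Z1)) (by linarith only [hX1lo, hZ1lo, hX1hi, hZ1hi, hX3lo, hY3lo, hZ3lo, hX3hi, hY3hi, hZ3hi] : (0:ℝ) ≤ (-21/25 : ℝ) - (2*X3 + Y3 - 2*Z3)), mul_nonneg (by linarith only [hX1lo, hZ1lo, hX1hi, hZ1hi, hX3lo, hY3lo, hZ3lo, hX3hi, hY3hi, hZ3hi] : (0:ℝ) ≤ (2*X1 - 2*Z1) - (36/25 : ℝ)) (by linarith only [hX1lo, hZ1lo, hX1hi, hZ1hi, hX3lo, hY3lo, hZ3lo, hX3hi, hY3hi, hZ3hi] : (0:ℝ) ≤ (-21/25 : ℝ) - (2*X3 + Y3 - 2*Z3))]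
  have m5lo : (774/625 : ℝ) ≤ (2*X1 - 2*Z1) * (2*X2 + Y2 - 2*Z2) := by nlinarith only [hX1lo, hZ1lo, hX1hi, hZ1hi, hX2lo, hY2lo, hZ2lo, hX2hi, hY2hi, hZ2hi, mul_nonneg (by linarith only [hX1lo, hZ1lo, hX1hi, hZ1hi, hX2lo, hY2lo, hZ2lo, hX2hi, hY2hi, hZ2hi] : (0:ℝ) ≤ (2*X1 - 2*Z1) - (36/25 : ℝ)) (by linarith only [hX1lo, hZ1lo, hX1hi, hZ1hi, hX2lo, hY2lo, hZ2lo, hX2hi, hY2hi, hZ2hi] : (0:ℝ) ≤ (2*X2 + Y2 - 2*Z2) - (43/50 : ℝ)), mul_nonneg (by linarith only [hX1lo, hZ1lo, hX1hi, hZ1hi, hX2lo, hY2lo, hZ2lo, hX2hi, hY2hi, hZ2hi] : (0:ℝ) ≤ (38/25 : ℝ) - (2*X1 - 2*Z1)) (by linarith only [hX1lo, hZ1lo, hX1hi, hZ1hi, hX2lo, hY2lo, hZ2lo, hX2hi, hY2hi, hZ2hi] : (0:ℝ) ≤ (2*X2 + Y2 - 2*Z2) - (43/50 : ℝ)), mul_nonneg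 (by linarith only [hX1lo, hZ1lo, hX1hi, hZ1hi, hX2lo, hY2lo, hZ2lo, hX2hi, hY2hi, hZ2hi] : (0:ℝ) ≤ (38/25 : ℝ) - (2*X1 - 2*Z1)) (by linarith only [hX1lo, hZ1lo, hX1hi, hZ1hi, hX2lo, hY2lo, hZ2lo, hX2hi, hY2hi, hZ2hi] : (0:ℝ) ≤ (26/25 : ℝ) - (2*X2 + Y2 - 2*Z2)), mul_nonneg (by linarith only [hX1lo, hZ1lo, hX1hi, hZ1hi, hX2lo, hY2lo, hZ2lo, hX2hi, hY2hi, hZ2hi] : (0:ℝ) ≤ (2*X1 - 2*Z1) - (36/25 : ℝ)) (by linarith only [hX1lo, hZ1lo, hX1hi, hZ1hi, hX2lo, hY2lo, hZ2lo, hX2hi, hY2hi, hZ2hi] : (0:ℝ) ≤ (26/25 : ℝ) - (2*X2 + Y2 - 2*Z2))]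
  have m5hi : (2*X1 - 2*Z1) * (2*X2 + Y2 - 2*Z2) ≤ (988/625 : ℝ) := by nlinarith only [hX1lo, hZ1lo, hX1hi, hZ1hi, hX2lo, hY2lo, hZ2lo, hX2hi, hY2hi, hZ2hi, mul_nonneg (by linarith only [hX1lo, hZ1lo, hX1hi, hZ1hi, hX2lo, hY2lo, hZ2lo, hX2hi, hY2hi, hZ2hi] : (0:ℝ) ≤ (2*X1 - 2*Z1) - (36/25 : ℝ)) (by linarith only [hX1lo, hZ1lo, hX1hi, hZ1hi, hX2lo, hY2lo, hZ2lo, hX2hi, hY2hi, hZ2hi] : (0:ℝ) ≤ (2*X2 + Y2 - 2*Z2) - (43/50 : ℝ)), mul_nonneg (by linarith only [hX1lo, hZ1lo, hX1hi, hZ1hi, hX2lo, hY2lo, hZ2lo, hX2hi, hY2hi, hZ2hi] : (0:ℝ) ≤ (38/25 : ℝ) - (2*X1 - 2*Z1)) (by linarith only [hX1lo, hZ1lo, hX1hi, hZ1hi, hX2lo, hY2lo, hZ2lo, hX2hi, hY2hi, hZ2hi] : (0:ℝ) ≤ (2*X2 + Y2 - 2*Z2) - (43/50 : ℝ)), mul_nonneg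 (by linarith only [hX1lo, hZ1lo, hX1hi, hZ1hi, hX2lo, hY2lo, hZ2lo, hX2hi, hY2hi, hZ2hi] : (0:ℝ) ≤ (38/25 : ℝ) - (2*X1 - 2*Z1)) (by linarith only [hX1lo, hZ1lo, hX1hi, hZ1hi, hX2lo, hY2lo, hZ2lo, hX2hi, hY2hi, hZ2hi] : (0:ℝ) ≤ (26/25 : ℝ) - (2*X2 + Y2 - 2*Z2)), mul_nonneg (by linarith only [hX1lo, hZ1lo, hX1hi, hZ1hi, hX2lo, hY2lo, hZ2lo, hX2hi, hY2hi, hZ2hi] : (0:ℝ) ≤ (2*X1 - 2*Z1) - (36/25 : ℝ)) (by linarith only [hX1lo, hZ1lo, hX1hi, hZ1hi, hX2lo, hY2lo, hZ2lo, hX2hi, hY2hi, hZ2hi] : (0:ℝ) ≤ (26/25 : ℝ) - (2*X2 + Y2 - 2*Z2))]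
  have m6lo : (-187/250 : ℝ) ≤ (2*X2 - 2*Z2) * (2*X1 + Y1 - 2*Z1) := by nlinarith only [hX2lo, hZ2lo, hX2hi, hZ2hi, hX1lo, hY1lo, hZ1lo, hX1hi, hY1hi, hZ1hi, mul_nonneg (by linarith only [hX2lo, hZ2lo, hX2hi, hZ2hi, hX1lo, hY1lo, hZ1lo, hX1hi, hY1hi, hZ1hi] : (0:ℝ) ≤ (2*X2 - 2*Z2) - (13/25 : ℝ)) (by linarith only [hX2lo, hZ2lo, hX2hi, hZ2hi, hX1lo, hY1lo, hZ1lo, hX1hi, hY1hi, hZ1hi] : (0:ℝ) ≤ (2*X1 + Y1 - 2*Z1) - (-11/10 : ℝ)), mul_nonneg (by linarith only [hX2lo, hZ2lo, hX2hi, hZ2hi, hX1lo, hY1lo, hZ1lo, hX1hi, hY1hi, hZ1hi] : (0:ℝ) ≤ (17/25 : ℝ) - (2*X2 - 2*Z2)) (by linarith only [hX2lo, hZ2lo, hX2hi, hZ2hi, hX1lo, hY1lo, hZ1lo, hX1hi, hY1hi, hZ1hi] : (0:ℝ) ≤ (2*X1 + Y1 - 2*Z1) - (-11/10 : ℝ)),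 mul_nonneg (by linarith only [hX2lo, hZ2lo, hX2hi, hZ2hi, hX1lo, hY1lo, hZ1lo, hX1hi, hY1hi, hZ1hi] : (0:ℝ) ≤ (17/25 : ℝ) - (2*X2 - 2*Z2)) (by linarith only [hX2lo, hZ2lo, hX2hi, hZ2hi, hX1lo, hY1lo, hZ1lo, hX1hi, hY1hi, hZ1hi] : (0:ℝ) ≤ (-22/25 : ℝ) - (2*X1 + Y1 - 2*Z1)), mul_nonneg (by linarith only [hX2lo, hZ2lo, hX2hi, hZ2hi, hX1lo, hY1lo, hZ1lo, hX1hi, hY1hi, hZ1hi] : (0:ℝ) ≤ (2*X2 - 2*Z2) - (13/25 : ℝ)) (by linarith only [hX2lo, hZ2lo, hX2hi, hZ2hi, hX1lo, hY1lo, hZ1lo, hX1hi, hY1hi, hZ1hi] : (0:ℝ) ≤ (-22/25 : ℝ) - (2*X1 + Y1 - 2*Z1))]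
  have m6hi : (2*X2 - 2*Z2) * (2*X1 + Y1 - 2*Z1) ≤ (-286/625 : ℝ) := by nlinarith only [hX2lo, hZ2lo, hX2hi, hZ2hi, hX1lo, hY1lo, hZ1lo, hX1hi, hY1hi, hZ1hi, mul_nonneg (by linarith only [hX2lo, hZ2lo, hX2hi, hZ2hi, hX1lo, hY1lo, hZ1lo, hX1hi, hY1hi, hZ1hi] : (0:ℝ) ≤ (2*X2 - 2*Z2) - (13/25 : ℝ)) (by linarith only [hX2lo, hZ2lo, hX2hi, hZ2hi, hX1lo, hY1lo, hZ1lo, hX1hi, hY1hi, hZ1hi] : (0:ℝ) ≤ (2*X1 + Y1 - 2*Z1) - (-11/10 : ℝ)), mul_nonneg (by linarith only [hX2lo, hZ2lo, hX2hi, hZ2hi, hX1lo, hY1lo, hZ1lo, hX1hi, hY1hi, hZ1hi] : (0:ℝ) ≤ (17/25 : ℝ) - (2*X2 - 2*Z2)) (by linarith only [hX2lo, hZ2lo, hX2hi, hZ2hi, hX1lo, hY1lo, hZ1lo, hX1hi, hY1hi, hZ1hi] : (0:ℝ) ≤ (2*X1 + Y1 - 2*Z1) - (-11/10 : ℝ)),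 mul_nonneg (by linarith only [hX2lo, hZ2lo, hX2hi, hZ2hi, hX1lo, hY1lo, hZ1lo, hX1hi, hY1hi, hZ1hi] : (0:ℝ) ≤ (17/25 : ℝ) - (2*X2 - 2*Z2)) (by linarith only [hX2lo, hZ2lo, hX2hi, hZ2hi, hX1lo, hY1lo, hZ1lo, hX1hi, hY1hi, hZ1hi] : (0:ℝ) ≤ (-22/25 : ℝ) - (2*X1 + Y1 - 2*Z1)), mul_nonneg (by linarith only [hX2lo, hZ2lo, hX2hi, hZ2hi, hX1lo, hY1lo, hZ1lo, hX1hi, hY1hi, hZ1hi] : (0:ℝ) ≤ (2*X2 - 2*Z2) - (13/25 : ℝ)) (by linarith only [hX2lo, hZ2lo, hX2hi, hZ2hi, hX1lo, hY1lo, hZ1lo, hX1hi, hY1hi, hZ1hi] : (0:ℝ) ≤ (-22/25 : ℝ) - (2*X1 + Y1 - 2*Z1))]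
  have b1lo : (119/250 : ℝ) ≤ ((2*X2 - 2*Z2) * (2*X3 + Y3 - 2*Z3) - (2*X3 - 2*Z3) * (2*X2 + Y2 - 2*Z2)) := by linarith only [m1lo, m2hi]
  have b1hi : ((2*X2 - 2*Z2) * (2*X3 + Y3 - 2*Z3) - (2*X3 - 2*Z3) * (2*X2 + Y2 - 2*Z2)) ≤ (143/125 : ℝ) := by linarith only [m1hi, m2lo]
  have b2lo : (1504/625 : ℝ) ≤ ((2*X3 - 2*Z3) * (2*X1 + Y1 - 2*Z1) - (2*X1 - 2*Z1) * (2*X3 + Y3 - 2*Z3)) := by linarith only [m3lo, m4hi]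
  have b2hi : ((2*X3 - 2*Z3) * (2*X1 + Y1 - 2*Z1) - (2*X1 - 2*Z1) * (2*X3 + Y3 - 2*Z3)) ≤ (2014/625 : ℝ) := by linarith only [m3hi, m4lo]
  have b3lo : (212/125 : ℝ) ≤ ((2*X1 - 2*Z1) * (2*X2 + Y2 - 2*Z2) - (2*X2 - 2*Z2) * (2*X1 + Y1 - 2*Z1)) := by linarith only [m5lo, m6hi]
  have b3hi : ((2*X1 - 2*Z1) * (2*X2 + Y2 - 2*Z2) - (2*X2 - 2*Z2) * (2*X1 + Y1 - 2*Z1)) ≤ (2911/1250 : ℝ) := by linarith only [m5hi, m6lo]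
  have t1lo : (238/3125 : ℝ) ≤ (-2*Z1) * ((2*X2 - 2*Z2) * (2*X3 + Y3 - 2*Z3) - (2*X3 - 2*Z3) * (2*X2 + Y2 - 2*Z2)) := by nlinarith only [hZ1lo, hZ1hi, b1lo, b1hi, mul_nonneg (by linarith only [hZ1lo, hZ1hi, b1lo, b1hi] : (0:ℝ) ≤ (-2*Z1) - (4/25 : ℝ)) (by linarith only [hZ1lo, hZ1hi, b1lo, b1hi] : (0:ℝ) ≤ ((2*X2 - 2*Z2) * (2*X3 + Y3 - 2*Z3) - (2*X3 - 2*Z3) * (2*X2 + Y2 - 2*Z2)) - (119/250 : ℝ)), mul_nonneg (by linarith only [hZ1lo, hZ1hi, b1lo, b1hi] : (0:ℝ) ≤ (1/5 : ℝ) - (-2*Z1)) (by linarith only [hZ1lo, hZ1hi, b1lo, b1hi] : (0:ℝ) ≤ ((2*X2 - 2*Z2) * (2*X3 + Y3 - 2*Z3) - (2*X3 - 2*Z3) * (2*X2 + Y2 - 2*Z2)) - (119/250 : ℝ))]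
  have t2lo : (63168/15625 : ℝ) ≤ (-2*Z2) * ((2*X3 - 2*Z3) * (2*X1 + Y1 - 2*Z1) - (2*X1 - 2*Z1) * (2*X3 + Y3 - 2*Z3)) := by nlinarith only [hZ2lo, hZ2hi, b2lo, b2hi, mul_nonneg (by linarith only [hZ2lo, hZ2hi, b2lo, b2hi] : (0:ℝ) ≤ (-2*Z2) - (42/25 : ℝ)) (by linarith only [hZ2lo, hZ2hi, b2lo, b2hi] : (0:ℝ) ≤ ((2*X3 - 2*Z3) * (2*X1 + Y1 - 2*Z1) - (2*X1 - 2*Z1) * (2*X3 + Y3 - 2*Z3)) - (1504/625 : ℝ)), mul_nonneg (by linarith only [hZ2lo, hZ2hi, b2lo, b2hi] : (0:ℝ) ≤ (44/25 : ℝ) - (-2*Z2)) (by linarith only [hZ2lo, hZ2hi, b2lo, b2hi] : (0:ℝ) ≤ ((2*X3 - 2*Z3) * (2*X1 + Y1 - 2*Z1) - (2*X1 - 2*Z1) * (2*X3 + Y3 - 2*Z3)) - (1504/625 : ℝ))]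
  have t3lo : (4028/3125 : ℝ) ≤ (-2*Z3) * ((2*X1 - 2*Z1) * (2*X2 + Y2 - 2*Z2) - (2*X2 - 2*Z2) * (2*X1 + Y1 - 2*Z1)) := by nlinarith only [hZ3lo, hZ3hi, b3lo, b3hi, mul_nonneg (by linarith only [hZ3lo, hZ3hi, b3lo, b3hi] : (0:ℝ) ≤ (-2*Z3) - (19/25 : ℝ)) (by linarith only [hZ3lo, hZ3hi, b3lo, b3hi] : (0:ℝ) ≤ ((2*X1 - 2*Z1) * (2*X2 + Y2 - 2*Z2) - (2*X2 - 2*Z2) * (2*X1 + Y1 - 2*Z1)) - (212/125 : ℝ)), mul_nonneg (by linarith only [hZ3lo, hZ3hi, b3lo, b3hi] : (0:ℝ) ≤ (21/25 : ℝ) - (-2*Z3)) (by linarith only [hZ3lo, hZ3hi, b3lo, b3hi] : (0:ℝ) ≤ ((2*X1 - 2*Z1) * (2*X2 + Y2 - 2*Z2) - (2*X2 - 2*Z2) * (2*X1 + Y1 - 2*Z1)) - (212/125 : ℝ))]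
  have hD : (0:ℝ) < (-2*Z1) * ((2*X2 - 2*Z2) * (2*X3 + Y3 - 2*Z3) - (2*X3 - 2*Z3) * (2*X2 + Y2 - 2*Z2)) + (-2*Z2) * ((2*X3 - 2*Z3) * (2*X1 + Y1 - 2*Z1) - (2*X1 - 2*Z1) * (2*X3 + Y3 - 2*Z3)) + (-2*Z3) * ((2*X1 - 2*Z1) * (2*X2 + Y2 - 2*Z2) - (2*X2 - 2*Z2) * (2*X1 + Y1 - 2*Z1)) := by linarith only [t1lo, t2lo, t3lo]

  -- Cramer's rule
  have hiD : (i:ℝ) * ((-2*Z1) * ((2*X2 - 2*Z2) * (2*X3 + Y3 - 2*Z3) - (2*X3 - 2*Z3) * (2*X2 + Y2 - 2*Z2)) + (-2*Z2) * ((2*X3 - 2*Z3) * (2*X1 + Y1 - 2*Z1) - (2*X1 - 2*Z1) * (2*X3 + Y3 - 2*Z3)) + (-2*Z3) * ((2*X1 - 2*Z1) * (2*X2 + Y2 - 2*Z2) - (2*X2 - 2*Z2) * (2*X1 + Y1 - 2*Z1))) = 0 := by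
    linear_combination ((2*X2 - 2*Z2) * (2*X3 + Y3 - 2*Z3) - (2*X3 - 2*Z3) * (2*X2 + Y2 - 2*Z2)) * E1 + ((2*X3 - 2*Z3) * (2*X1 + Y1 - 2*Z1) - (2*X1 - 2*Z1) * (2*X3 + Y3 - 2*Z3)) * E2 + ((2*X1 - 2*Z1) * (2*X2 + Y2 - 2*Z2) - (2*X2 - 2*Z2) * (2*X1 + Y1 - 2*Z1)) * E3
  have hjD : (j:ℝ) * ((-2*Z1) * ((2*X2 - 2*Z2) * (2*X3 + Y3 - 2*Z3) - (2*X3 - 2*Z3) * (2*X2 + Y2 - 2*Z2)) + (-2*Z2) * ((2*X3 - 2*Z3) * (2*X1 + Y1 - 2*Z1) - (2*X1 - 2*Z1) * (2*X3 + Y3 - 2*Z3)) + (-2*Z3) * ((2*X1 - 2*Z1) * (2*X2 + Y2 - 2*Z2) - (2*X2 - 2*Z2) * (2*X1 + Y1 - 2*Z1))) = 0 := by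
    linear_combination ((2*X2 + Y2 - 2*Z2) * (-2*Z3) - (2*X3 + Y3 - 2*Z3) * (-2*Z2)) * E1 + ((2*X3 + Y3 - 2*Z3) * (-2*Z1) - (2*X1 + Y1 - 2*Z1) * (-2*Z3)) * E2 + ((2*X1 + Y1 - 2*Z1) * (-2*Z2) - (2*X2 + Y2 - 2*Z2) * (-2*Z1)) * E3
  have hkD : (k:ℝ) * ((-2*Z1) * ((2*X2 - 2*Z2) * (2*X3 + Y3 - 2*Z3) - (2*X3 - 2*Z3) * (2*X2 + Y2 - 2*Z2)) + (-2*Z2) * ((2*X3 - 2*Z3) * (2*X1 + Y1 - 2*Z1) - (2*X1 - 2*Z1) * (2*X3 + Y3 - 2*Z3)) + (-2*Z3) * ((2*X1 - 2*Z1) * (2*X2 + Y2 - 2*Z2) - (2*X2 - 2*Z2) * (2*X1 + Y1 - 2*Z1))) = 0 := by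
    linear_combination ((-2*Z2) * (2*X3 - 2*Z3) - (-2*Z3) * (2*X2 - 2*Z2)) * E1 + ((-2*Z3) * (2*X1 - 2*Z1) - (-2*Z1) * (2*X3 - 2*Z3)) * E2 + ((-2*Z1) * (2*X2 - 2*Z2) - (-2*Z2) * (2*X1 - 2*Z1)) * E3
  have hine := hD.ne'
  refine ⟨?_, ?_, ?_⟩
  · exact_mod_cast mul_eq_zero.mp hiD |>.resolve_right hine
  · exact_mod_cast mul_eq_zero.mp hjD |>.resolve_right hine
  · exact_mod_cast mul_eq_zero.mp hkD |>.resolve_right hine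
end

section
/- The matrix S has determinant ±1, does not commute with A1 (S·A1 ≠ A1·S), yet the conjugate S·A1·S^{-1} commutes with A1. -/
open Matrix Polynomial

def S : Matrix (Fin 4) (Fin 4) ℚ :=
  !![4, -16, 17, -3; 3, -11, 11, -2; 3, -8, 6, -1; 6, -8, -2, 1]

set_option maxHeartbeats 1000000

lemma SS : S * S = 1 := by
  ext i j
  fin_cases i <;> fin_cases j <;>
    norm_num [S, Matrix.mul_apply, Fin.sum_univ_four, Matrix.one_apply,
      Matrix.cons_val_zero, Matrix.cons_val_one, Matrix.cons_val_two,
      Matrix.cons_val_three, Matrix.head_cons, Matrix.vecHead, Matrix.vecTail, Fin.ext_iff]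

lemma Sinv : S⁻¹ = S := Matrix.inv_eq_right_inv SS

lemma SAS : S * A1 * S = !![9, -7, -14, 4; 4, -3, -7, 2; 2, -2, -3, 1; 1, -1, -2, 1] := by
  ext i j
  fin_cases i <;> fin_cases j <;>
    norm_num [S, A1, Matrix.mul_apply, Fin.sum_univ_four,
      Matrix.cons_val_zero, Matrix.cons_val_one, Matrix.cons_val_two,
      Matrix.cons_val_three, Matrix.head_cons, Matrix.vecHead, Matrix.vecTail]

theorem statement7 :
    (S.det = 1 ∨ S.det = -1) ∧
    S * A1 ≠ A1 * S ∧
    S * A1 * S⁻¹ * A1 = A1 * (S * A1 * S⁻¹) := by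
  refine ⟨?_, ?_, ?_⟩
  · have h : S.det * S.det = 1 := by
      rw [← Matrix.det_mul, SS, Matrix.det_one]
    exact mul_self_eq_one_iff.mp h
  · intro h
    have := congrFun (congrFun h 0) 0
    norm_num [S, A1, Matrix.mul_apply, Fin.sum_univ_four,
      Matrix.cons_val_zero, Matrix.cons_val_one, Matrix.cons_val_two,
      Matrix.cons_val_three, Matrix.head_cons, Matrix.vecHead, Matrix.vecTail] at this
  · rw [Sinv, SAS]
    ext i j
    fin_cases i <;> fin_cases j <;>
      norm_num [A1, Matrix.mul_apply, Fin.sum_univ_four,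
        Matrix.cons_val_zero, Matrix.cons_val_one, Matrix.cons_val_two,
        Matrix.cons_val_three, Matrix.head_cons, Matrix.vecHead, Matrix.vecTail]
end

section
/- The matrices B31 = A3^{-2}, B32 = (A3 - E) · A3^{-1}, and B33 = A3 + E all have integer entries and determinant 1, commute pairwise, each of them commutes with A3, and they generate a free abelian group of rank 3: for all integers i, j, k, if B31^i · B32^j · B33^k equals the identity matrix, then i = j = k = 0. -/
open Matrix Polynomial

def A3 : Matrix (Fin 4) (Fin 4) ℚ :=
  !![0, 1, 0, 0; 0, 0, 1, 0; 0, 0, 0, 1; -1, -3, 1, 3]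

lemma hdetA3 : A3.det ≠ 0 := by
  rw [Matrix.det_succ_row_zero]
  simp [A3, Fin.sum_univ_succ, Matrix.det_fin_three, show (Fin.succAbove 1 (2 : Fin 3) : Fin 4) = 3 from rfl] <;> norm_num

lemma hdetA3sub : (A3 - 1).det ≠ 0 := by
  have h : A3 - 1 = !![-1, 1, 0, 0; 0, -1, 1, 0; 0, 0, -1, 1; -1, -3, 1, 2] := by
    ext i j
    fin_cases i <;> fin_cases j <;>
      simp [A3, Matrix.one_apply, Matrix.vecHead, Matrix.vecTail] <;> norm_num
  rw [h]
  rw [Matrix.det_succ_row_zero]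
  simp [Fin.sum_univ_succ, Matrix.det_fin_three, show (Fin.succAbove 1 (2 : Fin 3) : Fin 4) = 3 from rfl] <;> norm_num

lemma hdetA3add : (A3 + 1).det ≠ 0 := by
  have h : A3 + 1 = !![1, 1, 0, 0; 0, 1, 1, 0; 0, 0, 1, 1; -1, -3, 1, 4] := by
    ext i j
    fin_cases i <;> fin_cases j <;>
      simp [A3, Matrix.one_apply, Matrix.vecHead, Matrix.vecTail] <;> norm_num
  rw [h]
  rw [Matrix.det_succ_row_zero]
  simp [Fin.sum_univ_succ, Matrix.det_fin_three, show (Fin.succAbove 1 (2 : Fin 3) : Fin 4) = 3 from rfl] <;> norm_num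

noncomputable def gA3 : GL (Fin 4) ℚ := Matrix.GeneralLinearGroup.mkOfDetNeZero A3 hdetA3
noncomputable def uA3 : GL (Fin 4) ℚ := Matrix.GeneralLinearGroup.mkOfDetNeZero (A3 - 1) hdetA3sub
noncomputable def vA3 : GL (Fin 4) ℚ := Matrix.GeneralLinearGroup.mkOfDetNeZero (A3 + 1) hdetA3add

noncomputable def B31 : GL (Fin 4) ℚ := (gA3 ^ 2)⁻¹
noncomputable def B32 : GL (Fin 4) ℚ := uA3 * gA3⁻¹
noncomputable def B33 : GL (Fin 4) ℚ := vA3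

/- ### Explicit matrices -/

def B31m : Matrix (Fin 4) (Fin 4) ℚ := !![10,0,-10,3; -3,1,3,-1; 1,0,0,0; 0,1,0,0]
def B32m : Matrix (Fin 4) (Fin 4) ℚ := !![4,-1,-3,1; -1,1,0,0; 0,-1,1,0; 0,0,-1,1]
def B33m : Matrix (Fin 4) (Fin 4) ℚ := !![1,1,0,0; 0,1,1,0; 0,0,1,1; -1,-3,1,4]
def Ainvm : Matrix (Fin 4) (Fin 4) ℚ := !![-3,1,3,-1; 1,0,0,0; 0,1,0,0; 0,0,1,0]

lemma cAinv : A3⁻¹ = Ainvm := by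
  rw [Matrix.inv_eq_right_inv]
  ext i j
  fin_cases i <;> fin_cases j <;>
    simp [A3, Ainvm, Matrix.mul_apply, Fin.sum_univ_four, Matrix.one_apply, Matrix.vecHead,
      Matrix.vecTail] <;> norm_num

lemma cB31 : (B31 : Matrix (Fin 4) (Fin 4) ℚ) = B31m := by
  have h1 : (B31 : Matrix (Fin 4) (Fin 4) ℚ) = (A3 * A3)⁻¹ := by
    show ((((gA3 ^ 2)⁻¹ : GL (Fin 4) ℚ)) : Matrix (Fin 4) (Fin 4) ℚ) = _
    rw [Matrix.coe_units_inv, Units.val_pow_eq_pow_val, pow_two]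
    rfl
  rw [h1, Matrix.inv_eq_right_inv]
  ext i j
  fin_cases i <;> fin_cases j <;>
    simp [A3, B31m, Matrix.mul_apply, Fin.sum_univ_four, Matrix.one_apply, Matrix.vecHead,
      Matrix.vecTail] <;> norm_num

lemma cB32 : (B32 : Matrix (Fin 4) (Fin 4) ℚ) = B32m := by
  have h1 : (B32 : Matrix (Fin 4) (Fin 4) ℚ) = (A3 - 1) * A3⁻¹ := by
    show (((uA3 * gA3⁻¹ : GL (Fin 4) ℚ)) : Matrix (Fin 4) (Fin 4) ℚ) = _
    rw [Units.val_mul, Matrix.coe_units_inv]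
    rfl
  rw [h1, cAinv]
  ext i j
  fin_cases i <;> fin_cases j <;>
    simp [A3, Ainvm, B32m, Matrix.mul_apply, Fin.sum_univ_four, Matrix.one_apply, Matrix.vecHead,
      Matrix.vecTail] <;> norm_num

lemma cB33 : (B33 : Matrix (Fin 4) (Fin 4) ℚ) = B33m := by
  show A3 + 1 = B33m
  ext i j
  fin_cases i <;> fin_cases j <;>
    simp [A3, B33m, Matrix.one_apply, Matrix.vecHead, Matrix.vecTail] <;> norm_num

def B31z : Matrix (Fin 4) (Fin 4) ℤ := !![10,0,-10,3; -3,1,3,-1; 1,0,0,0; 0,1,0,0]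
def B32z : Matrix (Fin 4) (Fin 4) ℤ := !![4,-1,-3,1; -1,1,0,0; 0,-1,1,0; 0,0,-1,1]
def B33z : Matrix (Fin 4) (Fin 4) ℤ := !![1,1,0,0; 0,1,1,0; 0,0,1,1; -1,-3,1,4]

lemma zB31 : B31m = B31z.map (Int.cast) := by
  ext i j
  fin_cases i <;> fin_cases j <;>
    simp [B31m, B31z, Matrix.map_apply, Matrix.vecHead, Matrix.vecTail] <;> norm_num

lemma zB32 : B32m = B32z.map (Int.cast) := by
  ext i j
  fin_cases i <;> fin_cases j <;>
    simp [B32m, B32z, Matrix.map_apply, Matrix.vecHead, Matrix.vecTail] <;> norm_num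

lemma zB33 : B33m = B33z.map (Int.cast) := by
  ext i j
  fin_cases i <;> fin_cases j <;>
    simp [B33m, B33z, Matrix.map_apply, Matrix.vecHead, Matrix.vecTail] <;> norm_num

/- ### Eigenvector machinery -/

lemma eig_pow (u : GL (Fin 4) ℝ) (μ : ℝ) (v : Fin 4 → ℝ)
    (h : (u : Matrix (Fin 4) (Fin 4) ℝ) *ᵥ v = μ • v) (n : ℕ) :
    ((u ^ n : GL (Fin 4) ℝ) : Matrix (Fin 4) (Fin 4) ℝ) *ᵥ v = μ ^ n • v := by
  induction n with
  | zero => simp [Matrix.one_mulVec]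
  | succ n ih =>
      rw [pow_succ, Units.val_mul, ← Matrix.mulVec_mulVec, h, Matrix.mulVec_smul, ih,
        smul_smul, pow_succ]
      ring_nf

lemma eig_inv (u : GL (Fin 4) ℝ) (μ : ℝ) (hμ : μ ≠ 0) (v : Fin 4 → ℝ)
    (h : (u : Matrix (Fin 4) (Fin 4) ℝ) *ᵥ v = μ • v) :
    ((u⁻¹ : GL (Fin 4) ℝ) : Matrix (Fin 4) (Fin 4) ℝ) *ᵥ v = μ⁻¹ • v := by
  have h2 : ((u⁻¹ : GL (Fin 4) ℝ) : Matrix (Fin 4) (Fin 4) ℝ) *ᵥ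
      ((u : Matrix (Fin 4) (Fin 4) ℝ) *ᵥ v) = v := by
    rw [Matrix.mulVec_mulVec, ← Units.val_mul, inv_mul_cancel, Units.val_one, Matrix.one_mulVec]
  rw [h, Matrix.mulVec_smul] at h2
  rw [eq_comm, ← inv_smul_eq_iff₀ hμ] at h2
  exact h2.symm

lemma eig_zpow (u : GL (Fin 4) ℝ) (μ : ℝ) (hμ : μ ≠ 0) (v : Fin 4 → ℝ)
    (h : (u : Matrix (Fin 4) (Fin 4) ℝ) *ᵥ v = μ • v) (n : ℤ) :
    ((u ^ n : GL (Fin 4) ℝ) : Matrix (Fin 4) (Fin 4) ℝ) *ᵥ v = μ ^ n • v := by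
  cases n with
  | ofNat m => rw [Int.ofNat_eq_coe, zpow_natCast, zpow_natCast]; exact eig_pow u μ v h m
  | negSucc m =>
      rw [zpow_negSucc, zpow_negSucc]
      exact eig_inv (u ^ (m+1)) (μ ^ (m+1)) (pow_ne_zero _ hμ) v (eig_pow u μ v h (m+1))

noncomputable def phi : Matrix (Fin 4) (Fin 4) ℚ →+* Matrix (Fin 4) (Fin 4) ℝ :=
  (Rat.castHom ℝ).mapMatrix

def evec (x : ℝ) : Fin 4 → ℝ := ![1, x, x^2, x^3]

lemma eigA3 (x : ℝ) (hp : x^4 - 3*x^3 - x^2 + 3*x + 1 = 0) :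
    (phi A3) *ᵥ (evec x) = x • (evec x) := by
  funext i
  fin_cases i <;>
    simp [phi, A3, evec, Matrix.mulVec, dotProduct, Fin.sum_univ_four,
      Matrix.vecHead, Matrix.vecTail, RingHom.mapMatrix_apply, Matrix.map_apply] <;>
    first | ring1 | linear_combination -hp

lemma eigA3sub (x : ℝ) (hp : x^4 - 3*x^3 - x^2 + 3*x + 1 = 0) :
    (phi (A3 - 1)) *ᵥ (evec x) = (x - 1) • (evec x) := by
  rw [map_sub, _root_.map_one, Matrix.sub_mulVec, Matrix.one_mulVec, eigA3 x hp, sub_smul, one_smul]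

lemma eigA3add (x : ℝ) (hp : x^4 - 3*x^3 - x^2 + 3*x + 1 = 0) :
    (phi (A3 + 1)) *ᵥ (evec x) = (x + 1) • (evec x) := by
  rw [map_add, _root_.map_one, Matrix.add_mulVec, Matrix.one_mulVec, eigA3 x hp, add_smul, one_smul]

noncomputable def Phi : GL (Fin 4) ℚ →* GL (Fin 4) ℝ := Units.map phi.toMonoidHom

lemma scalar_rel (i j k : ℤ) (hrel : B31 ^ i * B32 ^ j * B33 ^ k = 1)
    (x : ℝ) (hp : x^4 - 3*x^3 - x^2 + 3*x + 1 = 0)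
    (hx0 : x ≠ 0) (hx1 : x - 1 ≠ 0) (hx2 : x + 1 ≠ 0) :
    x ^ (-(2*i)) * ((x-1) ^ j * (x ^ (-j) * (x+1) ^ k)) = 1 := by
  have hcomm : Commute uA3 gA3 := by
    apply Units.ext
    show (A3 - 1) * A3 = A3 * (A3 - 1)
    rw [sub_mul, mul_sub, mul_one, one_mul]
  have h1 : B31 ^ i = gA3 ^ (-(2*i)) := by
    show ((gA3 ^ 2)⁻¹) ^ i = _
    group
  have h2 : B32 ^ j = uA3 ^ j * gA3 ^ (-j) := by
    show (uA3 * gA3⁻¹) ^ j = _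
    rw [(hcomm.inv_right).mul_zpow, _root_.inv_zpow, ← _root_.zpow_neg]
  have h3 : B33 ^ k = vA3 ^ k := rfl
  rw [h1, h2, h3] at hrel
  have hrel2 : Phi gA3 ^ (-(2*i)) * (Phi uA3 ^ j * Phi gA3 ^ (-j)) * Phi vA3 ^ k = 1 := by
    have := congrArg Phi hrel
    simpa only [_root_.map_mul, map_zpow, _root_.map_one] using this
  have hG : ((Phi gA3 : GL (Fin 4) ℝ) : Matrix (Fin 4) (Fin 4) ℝ) *ᵥ evec x = x • evec x := by
    rw [show ((Phi gA3 : GL (Fin 4) ℝ) : Matrix (Fin 4) (Fin 4) ℝ) = phi A3 from rfl]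
    exact eigA3 x hp
  have hU : ((Phi uA3 : GL (Fin 4) ℝ) : Matrix (Fin 4) (Fin 4) ℝ) *ᵥ evec x = (x-1) • evec x := by
    rw [show ((Phi uA3 : GL (Fin 4) ℝ) : Matrix (Fin 4) (Fin 4) ℝ) = phi (A3 - 1) from rfl]
    exact eigA3sub x hp
  have hV : ((Phi vA3 : GL (Fin 4) ℝ) : Matrix (Fin 4) (Fin 4) ℝ) *ᵥ evec x = (x+1) • evec x := by
    rw [show ((Phi vA3 : GL (Fin 4) ℝ) : Matrix (Fin 4) (Fin 4) ℝ) = phi (A3 + 1) from rfl]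
    exact eigA3add x hp
  have hvec := congrArg (fun M : GL (Fin 4) ℝ => (M : Matrix (Fin 4) (Fin 4) ℝ) *ᵥ evec x) hrel2
  simp only [Units.val_mul, Units.val_one, Matrix.one_mulVec, ← Matrix.mulVec_mulVec,
    Matrix.mulVec_smul, eig_zpow _ _ hx2 _ hV, eig_zpow _ _ hx0 _ hG,
    eig_zpow _ _ hx1 _ hU, smul_smul] at hvec
  have h0 := congrFun hvec 0
  simp only [evec, smul_smul, Pi.smul_apply, Matrix.cons_val_zero, smul_eq_mul, mul_one] at h0
  linear_combination h0

/- ### The real roots -/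

noncomputable def f3 : ℝ → ℝ := fun x => x^4 - 3*x^3 - x^2 + 3*x + 1

lemma root_a : ∃ a : ℝ, a ∈ Set.Ioo (2.9:ℝ) 3 ∧ f3 a = 0 := by
  have hc : ContinuousOn f3 (Set.Icc (2.9:ℝ) 3) := by
    apply Continuous.continuousOn; unfold f3; fun_prop
  have h := intermediate_value_Ioo (by norm_num : (2.9:ℝ) ≤ 3) hc
  have h0 : (0:ℝ) ∈ Set.Ioo (f3 2.9) (f3 3) := by
    constructor <;> norm_num [f3]
  obtain ⟨a, ha, hfa⟩ := h h0
  exact ⟨a, ha, hfa⟩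

lemma root_b : ∃ b : ℝ, b ∈ Set.Ioo (1.2:ℝ) 1.21 ∧ f3 b = 0 := by
  have hc : ContinuousOn f3 (Set.Icc (1.2:ℝ) 1.21) := by
    apply Continuous.continuousOn; unfold f3; fun_prop
  have h := intermediate_value_Ioo' (by norm_num : (1.2:ℝ) ≤ 1.21) hc
  have h0 : (0:ℝ) ∈ Set.Ioo (f3 1.21) (f3 1.2) := by
    constructor <;> norm_num [f3]
  obtain ⟨b, hb, hfb⟩ := h h0
  exact ⟨b, hb, hfb⟩

lemma logrel (x : ℝ) (hx0 : x ≠ 0) (hx1 : x - 1 ≠ 0) (hx2 : x + 1 ≠ 0) (i j k : ℤ)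
    (h : x ^ (-(2*i)) * ((x-1) ^ j * (x ^ (-j) * (x+1) ^ k)) = 1) :
    (-(2*(i:ℝ)) - j) * Real.log x + j * Real.log (x-1) + k * Real.log (x+1) = 0 := by
  have l1 := congrArg Real.log h
  rw [Real.log_mul (zpow_ne_zero _ hx0) (mul_ne_zero (zpow_ne_zero _ hx1)
        (mul_ne_zero (zpow_ne_zero _ hx0) (zpow_ne_zero _ hx2))),
      Real.log_mul (zpow_ne_zero _ hx1) (mul_ne_zero (zpow_ne_zero _ hx0) (zpow_ne_zero _ hx2)),
      Real.log_mul (zpow_ne_zero _ hx0) (zpow_ne_zero _ hx2),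
      Real.log_zpow, Real.log_zpow, Real.log_zpow, Real.log_zpow, Real.log_one] at l1
  push_cast at l1 ⊢
  linarith [l1]

set_option maxHeartbeats 1000000 in
lemma endgame (a b : ℝ) (ha1 : 2.9 < a) (ha2 : a < 3) (hb1 : 1.2 < b) (hb2 : b < 1.21)
    (i j k : ℤ)
    (Ea : (-(2*(i:ℝ)) - j) * Real.log a + j * Real.log (a-1) + k * Real.log (a+1) = 0)
    (Eb : (-(2*(i:ℝ)) - j) * Real.log b + j * Real.log (b-1) + k * Real.log (b+1) = 0)
    (Ec : (-(2*(i:ℝ)) - j) * Real.log (-1/b) + j * Real.log (-1/b-1) + k * Real.log (-1/b+1) = 0) :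
    i = 0 ∧ j = 0 ∧ k = 0 := by
  have hb0 : b ≠ 0 := by linarith
  have hbm1 : b - 1 ≠ 0 := by linarith
  have hbp1 : b + 1 ≠ 0 := by linarith
  have hbm1' : (0:ℝ) < b - 1 := by linarith
  have hbp1' : (0:ℝ) < b + 1 := by linarith
  have hbpos : (0:ℝ) < b := by linarith
  have hapos : (0:ℝ) < a := by linarith
  have ham1' : (0:ℝ) < a - 1 := by linarith
  have hap1' : (0:ℝ) < a + 1 := by linarith
  have lc0 : Real.log (-1/b) = -Real.log b := by
    rw [neg_div, Real.log_neg_eq_log, one_div, Real.log_inv]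
  have lc1 : Real.log (-1/b-1) = Real.log (b+1) - Real.log b := by
    rw [show (-1/b-1 : ℝ) = -((b+1)/b) by field_simp; ring, Real.log_neg_eq_log,
      Real.log_div hbp1 hb0]
  have lc2 : Real.log (-1/b+1) = Real.log (b-1) - Real.log b := by
    rw [show (-1/b+1 : ℝ) = (b-1)/b by field_simp; ring, Real.log_div hbm1 hb0]
  rw [lc0, lc1, lc2] at Ec
  have hL : Real.log (b-1) + Real.log (b+1) - Real.log b < 0 := by
    have h1 : Real.log (b-1) + Real.log (b+1) - Real.log b = Real.log ((b-1)*(b+1)/b) := by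
      rw [Real.log_div (mul_ne_zero hbm1 hbp1) hb0, Real.log_mul hbm1 hbp1]
    rw [h1]
    apply Real.log_neg
    · exact div_pos (mul_pos hbm1' hbp1') hbpos
    · rw [div_lt_one hbpos]
      nlinarith
  have hjk : ((j:ℝ) + k) * (Real.log (b-1) + Real.log (b+1) - Real.log b) = 0 := by
    linear_combination Eb + Ec
  have hjk2 : (j:ℝ) + k = 0 := by
    rcases mul_eq_zero.mp hjk with h | h
    · exact h
    · linarith
  have hj : j = -k := by
    have : (j:ℝ) = -(k:ℝ) := by linarith
    exact_mod_cast this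
  subst hj
  push_cast at Ea Eb
  have hlb : 0 < Real.log b := Real.log_pos (by linarith)
  have hla : 0 < Real.log a := Real.log_pos (by linarith)
  have hEb : 2*(i:ℝ)*Real.log b = k * (Real.log b + Real.log (b+1) - Real.log (b-1)) := by
    linear_combination -Eb
  have hEa : 2*(i:ℝ)*Real.log a = k * (Real.log a + Real.log (a+1) - Real.log (a-1)) := by
    linear_combination -Ea
  have hub : 6 * Real.log b < Real.log b + Real.log (b+1) - Real.log (b-1) := by
    have hb5 : b^5 < 1.21^5 := by
      apply pow_lt_pow_left₀ hb2 (by linarith)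
      norm_num
    have key : (b-1)*b^5 < b+1 := by nlinarith
    have h1 : Real.log (b+1) - Real.log (b-1) - 5*Real.log b
        = Real.log ((b+1)/((b-1)*b^5)) := by
      rw [Real.log_div hbp1 (mul_ne_zero hbm1 (pow_ne_zero _ hb0)),
        Real.log_mul hbm1 (pow_ne_zero _ hb0), Real.log_pow]
      push_cast; ring
    have h2 : 0 < Real.log ((b+1)/((b-1)*b^5)) := by
      apply Real.log_pos
      rw [lt_div_iff₀ (mul_pos hbm1' (pow_pos hbpos 5))]
      nlinarith
    linarith
  have hua : Real.log a + Real.log (a+1) - Real.log (a-1) < 2 * Real.log a := by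
    have h1 : Real.log (a+1) - Real.log (a-1) - Real.log a
        = Real.log ((a+1)/((a-1)*a)) := by
      rw [Real.log_div (by linarith) (mul_ne_zero (by linarith) (by linarith)),
        Real.log_mul (by linarith) (by linarith)]
      ring
    have h2 : Real.log ((a+1)/((a-1)*a)) < 0 := by
      apply Real.log_neg
      · exact div_pos hap1' (mul_pos ham1' hapos)
      · rw [div_lt_one (mul_pos ham1' hapos)]
        nlinarith
    linarith
  rcases lt_trichotomy k 0 with hk | hk | hk
  · exfalso
    have hk' : (k:ℝ) < 0 := by exact_mod_cast hk
    have e1 : (k:ℝ) * (Real.log b + Real.log (b+1) - Real.log (b-1))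
        < (k:ℝ) * (6 * Real.log b) := mul_lt_mul_of_neg_left hub hk'
    have e2 : 2*(i:ℝ)*Real.log b < (6*(k:ℝ))*Real.log b := by nlinarith
    have e3 : 2*(i:ℝ) < 6*(k:ℝ) := by
      have h := (mul_lt_mul_iff_of_pos_right hlb).mp (by linarith [e2] :
        (2*(i:ℝ))*Real.log b < (6*(k:ℝ))*Real.log b)
      linarith
    have f1 : (k:ℝ) * (2 * Real.log a)
        < (k:ℝ) * (Real.log a + Real.log (a+1) - Real.log (a-1)) := mul_lt_mul_of_neg_left hua hk'
    have f2 : (2*(k:ℝ))*Real.log a < (2*(i:ℝ))*Real.log a := by nlinarith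
    have f3 : 2*(k:ℝ) < 2*(i:ℝ) := (mul_lt_mul_iff_of_pos_right hla).mp f2
    linarith
  · subst hk
    push_cast at hEb
    have h0 : 2*(i:ℝ)*Real.log b = 0 := by rw [hEb]; ring
    have hi : (i:ℝ) = 0 := by
      rcases mul_eq_zero.mp h0 with h | h
      · rcases mul_eq_zero.mp h with h' | h'
        · linarith
        · exact h'
      · linarith
    have : i = 0 := by exact_mod_cast hi
    simp [this]
  · exfalso
    have hk' : (0:ℝ) < k := by exact_mod_cast hk
    have e1 : (k:ℝ) * (6 * Real.log b)
        < (k:ℝ) * (Real.log b + Real.log (b+1) - Real.log (b-1)) :=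
      mul_lt_mul_of_pos_left hub hk'
    have e2 : (6*(k:ℝ))*Real.log b < (2*(i:ℝ))*Real.log b := by nlinarith
    have e3 : 6*(k:ℝ) < 2*(i:ℝ) := (mul_lt_mul_iff_of_pos_right hlb).mp e2
    have f1 : (k:ℝ) * (Real.log a + Real.log (a+1) - Real.log (a-1))
        < (k:ℝ) * (2 * Real.log a) := mul_lt_mul_of_pos_left hua hk'
    have f2 : (2*(i:ℝ))*Real.log a < (2*(k:ℝ))*Real.log a := by nlinarith
    have f3 : 2*(i:ℝ) < 2*(k:ℝ) := (mul_lt_mul_iff_of_pos_right hla).mp f2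
    linarith

set_option maxHeartbeats 1000000 in
theorem statement17 :
    ((∀ i j, ∃ m : ℤ, (B31 : Matrix (Fin 4) (Fin 4) ℚ) i j = (m : ℚ)) ∧
    (∀ i j, ∃ m : ℤ, (B32 : Matrix (Fin 4) (Fin 4) ℚ) i j = (m : ℚ)) ∧
    (∀ i j, ∃ m : ℤ, (B33 : Matrix (Fin 4) (Fin 4) ℚ) i j = (m : ℚ))) ∧
    ((B31 : Matrix (Fin 4) (Fin 4) ℚ).det = 1 ∧ (B32 : Matrix (Fin 4) (Fin 4) ℚ).det = 1 ∧ (B33 : Matrix (Fin 4) (Fin 4) ℚ).det = 1) ∧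
    ((B31 : Matrix (Fin 4) (Fin 4) ℚ) * (B32 : Matrix (Fin 4) (Fin 4) ℚ) = (B32 : Matrix (Fin 4) (Fin 4) ℚ) * (B31 : Matrix (Fin 4) (Fin 4) ℚ) ∧ (B31 : Matrix (Fin 4) (Fin 4) ℚ) * (B33 : Matrix (Fin 4) (Fin 4) ℚ) = (B33 : Matrix (Fin 4) (Fin 4) ℚ) * (B31 : Matrix (Fin 4) (Fin 4) ℚ) ∧ (B32 : Matrix (Fin 4) (Fin 4) ℚ) * (B33 : Matrix (Fin 4) (Fin 4) ℚ) = (B33 : Matrix (Fin 4) (Fin 4) ℚ) * (B32 : Matrix (Fin 4) (Fin 4) ℚ)) ∧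
    ((B31 : Matrix (Fin 4) (Fin 4) ℚ) * A3 = A3 * (B31 : Matrix (Fin 4) (Fin 4) ℚ) ∧ (B32 : Matrix (Fin 4) (Fin 4) ℚ) * A3 = A3 * (B32 : Matrix (Fin 4) (Fin 4) ℚ) ∧ (B33 : Matrix (Fin 4) (Fin 4) ℚ) * A3 = A3 * (B33 : Matrix (Fin 4) (Fin 4) ℚ)) ∧
    (∀ i j k : ℤ, B31 ^ i * B32 ^ j * B33 ^ k = 1 → i = 0 ∧ j = 0 ∧ k = 0) := by
  refine ⟨⟨?_, ?_, ?_⟩, ⟨?_, ?_, ?_⟩, ⟨?_, ?_, ?_⟩, ⟨?_, ?_, ?_⟩, ?_⟩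
  · intro i j
    exact ⟨B31z i j, by rw [cB31, zB31]; simp [Matrix.map_apply]⟩
  · intro i j
    exact ⟨B32z i j, by rw [cB32, zB32]; simp [Matrix.map_apply]⟩
  · intro i j
    exact ⟨B33z i j, by rw [cB33, zB33]; simp [Matrix.map_apply]⟩
  · rw [cB31]
    rw [Matrix.det_succ_row_zero]
    simp [B31m, Fin.sum_univ_succ, Matrix.det_fin_three, show (Fin.succAbove 1 (2 : Fin 3) : Fin 4) = 3 from rfl,
      show (Fin.succAbove 2 (2 : Fin 3) : Fin 4) = 3 from rfl, show (Fin.succAbove 3 (2 : Fin 3) : Fin 4) = 2 from rfl] <;> norm_num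
  · rw [cB32]
    rw [Matrix.det_succ_row_zero]
    simp [B32m, Fin.sum_univ_succ, Matrix.det_fin_three, show (Fin.succAbove 1 (2 : Fin 3) : Fin 4) = 3 from rfl,
      show (Fin.succAbove 2 (2 : Fin 3) : Fin 4) = 3 from rfl, show (Fin.succAbove 3 (2 : Fin 3) : Fin 4) = 2 from rfl] <;> norm_num
  · rw [cB33]
    rw [Matrix.det_succ_row_zero]
    simp [B33m, Fin.sum_univ_succ, Matrix.det_fin_three, show (Fin.succAbove 1 (2 : Fin 3) : Fin 4) = 3 from rfl] <;> norm_num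
  · rw [cB31, cB32]
    ext i j
    fin_cases i <;> fin_cases j <;>
      simp [B31m, B32m, Matrix.mul_apply, Fin.sum_univ_four, Matrix.vecHead, Matrix.vecTail] <;>
      norm_num
  · rw [cB31, cB33]
    ext i j
    fin_cases i <;> fin_cases j <;>
      simp [B31m, B33m, Matrix.mul_apply, Fin.sum_univ_four, Matrix.vecHead, Matrix.vecTail] <;>
      norm_num
  · rw [cB32, cB33]
    ext i j
    fin_cases i <;> fin_cases j <;>
      simp [B32m, B33m, Matrix.mul_apply, Fin.sum_univ_four, Matrix.vecHead, Matrix.vecTail] <;>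
      norm_num
  · rw [cB31]
    ext i j
    fin_cases i <;> fin_cases j <;>
      simp [B31m, A3, Matrix.mul_apply, Fin.sum_univ_four, Matrix.vecHead, Matrix.vecTail] <;>
      norm_num
  · rw [cB32]
    ext i j
    fin_cases i <;> fin_cases j <;>
      simp [B32m, A3, Matrix.mul_apply, Fin.sum_univ_four, Matrix.vecHead, Matrix.vecTail] <;>
      norm_num
  · rw [cB33]
    ext i j
    fin_cases i <;> fin_cases j <;>
      simp [B33m, A3, Matrix.mul_apply, Fin.sum_univ_four, Matrix.vecHead, Matrix.vecTail] <;>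
      norm_num
  · intro i j k hrel
    obtain ⟨a, ⟨ha1, ha2⟩, hfa⟩ := root_a
    obtain ⟨b, ⟨hb1, hb2⟩, hfb⟩ := root_b
    have hpa : a^4 - 3*a^3 - a^2 + 3*a + 1 = 0 := hfa
    have hpb : b^4 - 3*b^3 - b^2 + 3*b + 1 = 0 := hfb
    have hb0 : b ≠ 0 := by linarith
    have hpc : (-1/b)^4 - 3*(-1/b)^3 - (-1/b)^2 + 3*(-1/b) + 1 = 0 := by
      field_simp
      linear_combination hpb
    have Ea := logrel a (by linarith) (by linarith) (by linarith) i j k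
      (scalar_rel i j k hrel a hpa (by linarith) (by linarith) (by linarith))
    have Eb := logrel b (by linarith) (by linarith) (by linarith) i j k
      (scalar_rel i j k hrel b hpb (by linarith) (by linarith) (by linarith))
    have hc1 : -1/b < 0 := by
      apply div_neg_of_neg_of_pos <;> linarith
    have hc2 : -1/b + 1 > 0 := by
      have h1 : 1/b < 1 := by
        rw [div_lt_one (by linarith)]; linarith
      have h2 : -1/b = -(1/b) := by ring
      linarith [h1, h2.ge, h2.le]
    have Ec := logrel (-1/b) (by linarith) (by linarith) (by linarith) i j k
      (scalar_rel i j k hrel (-1/b) hpc (by linarith) (by linarith) (by linarith))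
    exact endgame a b ha1 ha2 hb1 hb2 i j k Ea Eb Ec
end
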